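/- arXiv:1805.07625 — 5 statements merged into one kernel-verified Lean document; each statement's English description precedes it below -/
import Mathlib

section
/- Let Ω > 0 and θ₀ > 0, and define θ(ζ) = (1/Ω)·( 1 + (θ₀Ω − 1)·shc(√(Ω/2)·ζ) ) for ζ > 0. Then θ satisfies θ″(ζ) + (2/ζ)·θ′(ζ) + (1 − Ω·θ(ζ))/2 = 0 for all ζ > 0, and θ(ζ) → θ₀ and θ′(ζ) → 0 as ζ → 0⁺; that is, θ solves the generalized Lane–Emden equation with γ = 2 and initial data θ(0) = θ₀, θ′(0) = 0. -/
open Filter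

/-- The cardinal hyperbolic sine: shc x = sinh x / x for x ≠ 0, and shc 0 = 1. -/
noncomputable def shc (x : ℝ) : ℝ := if x = 0 then 1 else Real.sinh x / x

lemma hd_sinh_mul (k ζ : ℝ) : HasDerivAt (fun x : ℝ => Real.sinh (k*x)) (k * Real.cosh (k*ζ)) ζ := by
  have h0 : HasDerivAt (fun x : ℝ => k * x) k ζ := by
    simpa using (hasDerivAt_id ζ).const_mul k
  exact ((Real.hasDerivAt_sinh (k*ζ)).comp ζ h0).congr_deriv (mul_comm _ _)

lemma hd_cosh_mul (k ζ : ℝ) : HasDerivAt (fun x : ℝ => Real.cosh (k*x)) (k * Real.sinh (k*ζ)) ζ := by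
  have h0 : HasDerivAt (fun x : ℝ => k * x) k ζ := by
    simpa using (hasDerivAt_id ζ).const_mul k
  exact ((Real.hasDerivAt_cosh (k*ζ)).comp ζ h0).congr_deriv (mul_comm _ _)

lemma hdA (k C ζ : ℝ) (hζ : ζ ≠ 0) :
    HasDerivAt (fun x => C * (Real.sinh (k*x) / x))
      (C * ((k * Real.cosh (k*ζ) * ζ - Real.sinh (k*ζ)) / ζ^2)) ζ := by
  have h := ((hd_sinh_mul k ζ).div (hasDerivAt_id ζ) hζ).const_mul C
  refine h.congr_deriv ?_
  simp only [id_eq]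
  field_simp

lemma hdB (k C ζ : ℝ) (hζ : ζ ≠ 0) :
    HasDerivAt (fun x => C * ((k * Real.cosh (k*x) * x - Real.sinh (k*x)) / x^2))
      (C * ((k^2 * Real.sinh (k*ζ) * ζ^2 - 2*k*Real.cosh (k*ζ)*ζ + 2*Real.sinh (k*ζ)) / ζ^3)) ζ := by
  have hc := hd_cosh_mul k ζ
  have hN : HasDerivAt (fun x => k * Real.cosh (k*x) * x - Real.sinh (k*x))
      (k^2 * Real.sinh (k*ζ) * ζ) ζ := by
    have h1 := ((hc.const_mul k).mul (hasDerivAt_id ζ)).sub (hd_sinh_mul k ζ)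
    refine h1.congr_deriv ?_
    simp only [id_eq]
    ring
  have hD : HasDerivAt (fun x : ℝ => x^2) (2*ζ) ζ := by
    simpa [mul_comm] using hasDerivAt_pow 2 ζ
  have h := (hN.div hD (pow_ne_zero 2 hζ)).const_mul C
  refine h.congr_deriv ?_
  field_simp
  ring

/-- For Ω > 0, θ₀ > 0, the profile
θ(ζ) = (1/Ω)(1 + (θ₀Ω − 1)·shc(√(Ω/2)·ζ)) solves the generalized Lane–Emden
equation with γ = 2, i.e. θ″ + (2/ζ)θ′ + (1 − Ωθ)/2 = 0 for ζ > 0, with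
θ(ζ) → θ₀ and θ′(ζ) → 0 as ζ → 0⁺. -/
theorem laneEmden_gamma_two_shc_solution
    (Ω θ₀ : ℝ) (hΩ : 0 < Ω) (hθ₀ : 0 < θ₀) (θ : ℝ → ℝ)
    (hθ : θ = fun ζ : ℝ =>
      (1 / Ω) * (1 + (θ₀ * Ω - 1) * shc (Real.sqrt (Ω / 2) * ζ))) :
    (∀ ζ : ℝ, 0 < ζ →
      deriv (deriv θ) ζ + (2 / ζ) * deriv θ ζ + (1 - Ω * θ ζ) / 2 = 0) ∧
    Tendsto θ (nhdsWithin 0 (Set.Ioi 0)) (nhds θ₀) ∧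
    Tendsto (deriv θ) (nhdsWithin 0 (Set.Ioi 0)) (nhds 0) := by
  set k := Real.sqrt (Ω / 2) with hk
  have hk0 : 0 < k := Real.sqrt_pos.mpr (by linarith)
  have hk2 : k^2 = Ω/2 := Real.sq_sqrt (by linarith)
  set C := (θ₀ * Ω - 1) / (Ω * k) with hC
  -- θ agrees with the smooth formula away from 0
  have hθg : ∀ ζ : ℝ, ζ ≠ 0 → θ ζ = 1/Ω + C * (Real.sinh (k*ζ) / ζ) := by
    intro ζ hζ
    have hkζ : k * ζ ≠ 0 := mul_ne_zero (ne_of_gt hk0) hζ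
    rw [hθ]
    simp only [shc, if_neg hkζ]
    have hk0' : k ≠ 0 := ne_of_gt hk0
    have hΩ' : Ω ≠ 0 := ne_of_gt hΩ
    rw [hC]
    field_simp
  -- eventual equality near any nonzero point
  have hev : ∀ ζ : ℝ, ζ ≠ 0 → θ =ᶠ[nhds ζ] (fun x => 1/Ω + C * (Real.sinh (k*x) / x)) := by
    intro ζ hζ
    filter_upwards [isOpen_ne.mem_nhds hζ] with x hx using hθg x hx
  -- first derivative
  have hd1 : ∀ ζ : ℝ, ζ ≠ 0 →
      deriv θ ζ = C * ((k * Real.cosh (k*ζ) * ζ - Real.sinh (k*ζ)) / ζ^2) := by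
    intro ζ hζ
    rw [Filter.EventuallyEq.deriv_eq (hev ζ hζ)]
    have h := ((hdA k C ζ hζ).const_add (1/Ω))
    exact h.deriv
  have hev1 : ∀ ζ : ℝ, ζ ≠ 0 → (deriv θ) =ᶠ[nhds ζ]
      (fun x => C * ((k * Real.cosh (k*x) * x - Real.sinh (k*x)) / x^2)) := by
    intro ζ hζ
    filter_upwards [isOpen_ne.mem_nhds hζ] with x hx using hd1 x hx
  have hd2 : ∀ ζ : ℝ, ζ ≠ 0 →
      deriv (deriv θ) ζ = C * ((k^2 * Real.sinh (k*ζ) * ζ^2 - 2*k*Real.cosh (k*ζ)*ζ + 2*Real.sinh (k*ζ)) / ζ^3) := by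
    intro ζ hζ
    rw [Filter.EventuallyEq.deriv_eq (hev1 ζ hζ)]
    exact (hdB k C ζ hζ).deriv
  refine ⟨?_, ?_, ?_⟩
  · intro ζ hζ
    have hζ' : ζ ≠ 0 := ne_of_gt hζ
    rw [hd2 ζ hζ', hd1 ζ hζ', hθg ζ hζ', hk2]
    have hΩ' : Ω ≠ 0 := ne_of_gt hΩ
    field_simp
    ring
  · -- limit of θ
    have hshc : Tendsto shc (nhdsWithin 0 {(0:ℝ)}ᶜ) (nhds 1) := by
      have h := (Real.hasDerivAt_sinh 0)
      rw [hasDerivAt_iff_tendsto_slope, Real.cosh_zero] at h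
      refine h.congr' ?_
      filter_upwards [self_mem_nhdsWithin] with x hx
      simp only [Set.mem_compl_iff, Set.mem_singleton_iff] at hx
      simp [shc, hx, slope_def_field, Real.sinh_zero]
    have hmap : Tendsto (fun ζ : ℝ => k * ζ) (nhdsWithin 0 (Set.Ioi 0)) (nhdsWithin 0 {(0:ℝ)}ᶜ) := by
      rw [tendsto_nhdsWithin_iff]
      constructor
      · exact ((continuous_const.mul continuous_id).tendsto' 0 0 (by simp)).mono_left
          nhdsWithin_le_nhds
      · filter_upwards [self_mem_nhdsWithin] with x hx
        exact Set.mem_compl_singleton_iff.mpr (mul_ne_zero (ne_of_gt hk0) (ne_of_gt hx))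
    have : Tendsto θ (nhdsWithin 0 (Set.Ioi 0)) (nhds ((1/Ω) * (1 + (θ₀*Ω - 1) * 1))) := by
      rw [hθ]
      exact (tendsto_const_nhds.mul ((tendsto_const_nhds.add
        (tendsto_const_nhds.mul (hshc.comp hmap)))))
    convert this using 2
    field_simp
    ring
  · -- limit of deriv θ
    have hlh : Tendsto (fun ζ : ℝ => (C * (k * Real.cosh (k*ζ) * ζ - Real.sinh (k*ζ))) / ζ^2)
        (nhdsWithin 0 (Set.Ioi 0)) (nhds 0) := by
      apply HasDerivAt.lhopital_zero_right_on_Ioo (a := (0:ℝ)) (b := 1) (by norm_num)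
        (f' := fun ζ => C * (k^2 * Real.sinh (k*ζ) * ζ)) (g' := fun ζ => 2*ζ)
      · intro x hx
        have h1 := (((( hd_cosh_mul k x).const_mul k).mul (hasDerivAt_id x)).sub
          (hd_sinh_mul k x)).const_mul C
        refine h1.congr_deriv ?_
        simp only [id_eq]
        ring
      · intro x hx
        simpa [mul_comm] using hasDerivAt_pow 2 x
      · intro x hx
        have := hx.1
        positivity
      · have : Tendsto (fun ζ : ℝ => C * (k * Real.cosh (k*ζ) * ζ - Real.sinh (k*ζ)))
            (nhds 0) (nhds 0) :=
          (continuous_const.mul (((continuous_const.mul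
            (Real.continuous_cosh.comp (continuous_const.mul continuous_id))).mul
            continuous_id).sub
            (Real.continuous_sinh.comp (continuous_const.mul continuous_id)))).tendsto' 0 0
            (by simp)
        exact this.mono_left nhdsWithin_le_nhds
      · have : Tendsto (fun ζ : ℝ => ζ^2) (nhds (0:ℝ)) (nhds 0) :=
          (continuous_pow 2).tendsto' 0 0 (by simp)
        exact this.mono_left nhdsWithin_le_nhds
      · have h0 : Tendsto (fun ζ : ℝ => C * k^2 * Real.sinh (k*ζ) / 2)
            (nhdsWithin 0 (Set.Ioi 0)) (nhds 0) := by
          apply Tendsto.mono_left _ nhdsWithin_le_nhds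
          exact ((continuous_const.mul
            (Real.continuous_sinh.comp (continuous_const.mul continuous_id))).div_const
            2).tendsto' 0 0 (by simp)
        refine h0.congr' ?_
        filter_upwards [self_mem_nhdsWithin] with x hx
        have hx' : x ≠ 0 := ne_of_gt hx
        field_simp
    refine hlh.congr' ?_
    filter_upwards [self_mem_nhdsWithin] with x hx
    rw [hd1 x (ne_of_gt hx)]
    ring_nf
end

section
/- Let n ≥ 1 be a natural number, Ω > 0, and ζ₀ > 0. Consider the linear nonautonomous system x′(ζ) = A(ζ)x(ζ) on [ζ₀, ∞), where A(ζ) is the 2×2 matrix with rows (0, 1) and (−Ω^{1/n}/(1 + 1/n), −2/ζ). Then the origin is asymptotically stable: (i) for every ε > 0 there exists δ > 0 such that every differentiable solution x : [ζ₀, ∞) → ℝ² with ‖x(ζ₀)‖ < δ satisfies ‖x(ζ)‖ < ε for all ζ ≥ ζ₀; and (ii) every differentiable solution x : [ζ₀, ∞) → ℝ² satisfies x(ζ) → 0 as ζ → ∞. -/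
open Filter

/-- Energy conservation for the Lane–Emden linearization: with y = ζx₁,
the quantity ω y² + y'² is constant along solutions. -/
lemma laneEmden_energy_conserved (ω ζ₀ : ℝ) (hζ₀ : 0 < ζ₀) (x₁ x₂ : ℝ → ℝ)
    (hx : ∀ ζ ∈ Set.Ici ζ₀,
      HasDerivWithinAt x₁ (x₂ ζ) (Set.Ici ζ₀) ζ ∧
      HasDerivWithinAt x₂ (-ω * x₁ ζ - (2 / ζ) * x₂ ζ) (Set.Ici ζ₀) ζ) :
    ∀ ζ ∈ Set.Ici ζ₀,
      ω * (ζ * x₁ ζ) ^ 2 + (x₁ ζ + ζ * x₂ ζ) ^ 2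
        = ω * (ζ₀ * x₁ ζ₀) ^ 2 + (x₁ ζ₀ + ζ₀ * x₂ ζ₀) ^ 2 := by
  set E : ℝ → ℝ := fun ζ => ω * (ζ * x₁ ζ) ^ 2 + (x₁ ζ + ζ * x₂ ζ) ^ 2 with hE
  have hderiv : ∀ ζ ∈ Set.Ici ζ₀, HasDerivWithinAt E 0 (Set.Ici ζ₀) ζ := by
    intro ζ hζ
    have hζpos : 0 < ζ := lt_of_lt_of_le hζ₀ hζ
    obtain ⟨h1, h2⟩ := hx ζ hζ
    have hy : HasDerivWithinAt (fun t => t * x₁ t) (1 * x₁ ζ + ζ * x₂ ζ) (Set.Ici ζ₀) ζ :=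
      (hasDerivWithinAt_id ζ _).mul h1
    have hv : HasDerivWithinAt (fun t => x₁ t + t * x₂ t)
        (x₂ ζ + (1 * x₂ ζ + ζ * (-ω * x₁ ζ - (2 / ζ) * x₂ ζ))) (Set.Ici ζ₀) ζ :=
      h1.add ((hasDerivWithinAt_id ζ _).mul h2)
    have := ((hy.pow 2).const_mul ω).add (hv.pow 2)
    convert this using 1
    case e'_9 =>
      have hζne : ζ ≠ 0 := ne_of_gt hζpos
      have h2ζ : ζ * (2 / ζ) = 2 := by field_simp
      linear_combination (2 * (x₁ ζ + ζ * x₂ ζ) * x₂ ζ) * h2ζ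
    all_goals rfl
  intro ζ hζ
  have := Convex.norm_image_sub_le_of_norm_hasDerivWithin_le (C := 0)
    (fun t ht => hderiv t ht) (fun t ht => by simp) (convex_Ici ζ₀) Set.self_mem_Ici hζ
  have h0 : ‖E ζ - E ζ₀‖ ≤ 0 := by simpa using this
  have : E ζ = E ζ₀ := norm_sub_eq_zero_iff.mp (le_antisymm h0 (norm_nonneg _))
  simpa [hE] using this

lemma laneEmden_aux (ω ζ₀ : ℝ) (hω : 0 < ω) (hζ₀ : 0 < ζ₀) :
    (∀ ε : ℝ, 0 < ε → ∃ δ : ℝ, 0 < δ ∧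
      ∀ x₁ x₂ : ℝ → ℝ,
        (∀ ζ ∈ Set.Ici ζ₀,
          HasDerivWithinAt x₁ (x₂ ζ) (Set.Ici ζ₀) ζ ∧
          HasDerivWithinAt x₂ (-ω * x₁ ζ - (2 / ζ) * x₂ ζ) (Set.Ici ζ₀) ζ) →
        Real.sqrt (x₁ ζ₀ ^ 2 + x₂ ζ₀ ^ 2) < δ →
        ∀ ζ : ℝ, ζ₀ ≤ ζ → Real.sqrt (x₁ ζ ^ 2 + x₂ ζ ^ 2) < ε) ∧
    (∀ x₁ x₂ : ℝ → ℝ,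
      (∀ ζ ∈ Set.Ici ζ₀,
        HasDerivWithinAt x₁ (x₂ ζ) (Set.Ici ζ₀) ζ ∧
        HasDerivWithinAt x₂ (-ω * x₁ ζ - (2 / ζ) * x₂ ζ) (Set.Ici ζ₀) ζ) →
      Tendsto (fun ζ : ℝ => Real.sqrt (x₁ ζ ^ 2 + x₂ ζ ^ 2)) atTop (nhds 0)) := by
  set K : ℝ := ζ₀ ^ 2 + 2 * ω * ζ₀ ^ 2 + 2 with hKdef
  have hK : 0 < K := by positivity
  clear_value K
  -- the key pointwise bound from energy conservation
  have key : ∀ x₁ x₂ : ℝ → ℝ,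
      (∀ ζ ∈ Set.Ici ζ₀,
        HasDerivWithinAt x₁ (x₂ ζ) (Set.Ici ζ₀) ζ ∧
        HasDerivWithinAt x₂ (-ω * x₁ ζ - (2 / ζ) * x₂ ζ) (Set.Ici ζ₀) ζ) →
      ∀ ζ, ζ₀ ≤ ζ →
        x₁ ζ ^ 2 + x₂ ζ ^ 2 ≤
          (ω * (ζ₀ * x₁ ζ₀) ^ 2 + (x₁ ζ₀ + ζ₀ * x₂ ζ₀) ^ 2) * K / (ω * ζ₀ ^ 2 * ζ ^ 2) := by
    intro x₁ x₂ hx ζ hζ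
    have hζpos : 0 < ζ := lt_of_lt_of_le hζ₀ hζ
    have heq := laneEmden_energy_conserved ω ζ₀ hζ₀ x₁ x₂ hx ζ hζ
    set a := x₁ ζ
    set b := x₂ ζ
    set E₀ : ℝ := ω * (ζ₀ * x₁ ζ₀) ^ 2 + (x₁ ζ₀ + ζ₀ * x₂ ζ₀) ^ 2 with hE₀
    have hE₀nn : 0 ≤ E₀ := by positivity
    have hζsq : ζ₀ ^ 2 ≤ ζ ^ 2 := by nlinarith
    have h1 : ω * ζ ^ 2 * a ^ 2 ≤ E₀ := by nlinarith [sq_nonneg (a + ζ * b)]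
    have h2 : ζ ^ 2 * b ^ 2 ≤ 2 * E₀ + 2 * a ^ 2 := by
      nlinarith [sq_nonneg (2 * a + ζ * b), mul_nonneg hω.le (sq_nonneg (ζ * a))]
    have h3 : ω * ζ₀ ^ 2 * a ^ 2 ≤ E₀ := by
      nlinarith [mul_le_mul_of_nonneg_left hζsq (mul_nonneg hω.le (sq_nonneg a))]
    have hmain : ω * ζ₀ ^ 2 * (ζ ^ 2 * (a ^ 2 + b ^ 2)) ≤ E₀ * K := by
      have h4 : ω * ζ₀ ^ 2 * (ζ ^ 2 * b ^ 2) ≤ ω * ζ₀ ^ 2 * (2 * E₀ + 2 * a ^ 2) :=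
        mul_le_mul_of_nonneg_left h2 (by positivity)
      nlinarith [mul_le_mul_of_nonneg_left h1 (sq_nonneg ζ₀)]
    have hpos : (0:ℝ) < ω * ζ₀ ^ 2 * ζ ^ 2 := by positivity
    rw [le_div_iff₀ hpos]
    nlinarith [hmain]
  constructor
  · -- Lyapunov stability
    intro ε hε
    set L : ℝ := ω * ζ₀ ^ 2 + 2 + 2 * ζ₀ ^ 2 with hLdef
    have hL : 0 < L := by positivity
    clear_value L
    set D : ℝ := L * K / (ω * ζ₀ ^ 4) with hDdef
    have hD : 0 < D := by positivity
    clear_value D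
    refine ⟨ε / Real.sqrt D, div_pos hε (Real.sqrt_pos.mpr hD), ?_⟩
    intro x₁ x₂ hx hsmall ζ hζ
    have hζpos : 0 < ζ := lt_of_lt_of_le hζ₀ hζ
    have hb := key x₁ x₂ hx ζ hζ
    set s₀ : ℝ := x₁ ζ₀ ^ 2 + x₂ ζ₀ ^ 2 with hs₀
    have hs₀nn : 0 ≤ s₀ := by rw [hs₀]; positivity
    have hE₀L : ω * (ζ₀ * x₁ ζ₀) ^ 2 + (x₁ ζ₀ + ζ₀ * x₂ ζ₀) ^ 2 ≤ L * s₀ := by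
      rw [hLdef, hs₀]
      nlinarith [sq_nonneg (x₁ ζ₀ - ζ₀ * x₂ ζ₀),
        mul_nonneg (mul_nonneg hω.le (sq_nonneg ζ₀)) (sq_nonneg (x₂ ζ₀)),
        mul_nonneg (mul_nonneg hω.le (sq_nonneg ζ₀)) (sq_nonneg (x₁ ζ₀)),
        sq_nonneg (x₁ ζ₀), sq_nonneg (x₂ ζ₀),
        mul_nonneg (sq_nonneg ζ₀) (sq_nonneg (x₁ ζ₀)),
        mul_nonneg (sq_nonneg ζ₀) (sq_nonneg (x₂ ζ₀))]
    have hζsq : ζ₀ ^ 2 ≤ ζ ^ 2 := by nlinarith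
    have hden : ω * ζ₀ ^ 2 * ζ₀ ^ 2 ≤ ω * ζ₀ ^ 2 * ζ ^ 2 :=
      mul_le_mul_of_nonneg_left hζsq (mul_nonneg hω.le (sq_nonneg ζ₀))
    have hdpos : (0:ℝ) < ω * ζ₀ ^ 2 * ζ₀ ^ 2 :=
      mul_pos (mul_pos hω (pow_pos hζ₀ 2)) (pow_pos hζ₀ 2)
    have hbound : x₁ ζ ^ 2 + x₂ ζ ^ 2 ≤ D * s₀ := by
      have h5 := div_le_div₀ (mul_nonneg (mul_nonneg hL.le hs₀nn) hK.le)
        (mul_le_mul_of_nonneg_right hE₀L hK.le) hdpos hden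
      have h6 : L * s₀ * K / (ω * ζ₀ ^ 2 * ζ₀ ^ 2) = D * s₀ := by
        rw [hDdef]
        field_simp
      exact hb.trans (h5.trans h6.le)
    have h6 : Real.sqrt (x₁ ζ ^ 2 + x₂ ζ ^ 2) ≤ Real.sqrt D * Real.sqrt s₀ := by
      rw [← Real.sqrt_mul hD.le]
      exact Real.sqrt_le_sqrt hbound
    have h7 : Real.sqrt D * Real.sqrt s₀ < Real.sqrt D * (ε / Real.sqrt D) :=
      mul_lt_mul_of_pos_left hsmall (Real.sqrt_pos.mpr hD)
    have h8 : Real.sqrt D * (ε / Real.sqrt D) = ε := by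
      field_simp
    linarith
  · -- convergence to 0
    intro x₁ x₂ hx
    set E₀ : ℝ := ω * (ζ₀ * x₁ ζ₀) ^ 2 + (x₁ ζ₀ + ζ₀ * x₂ ζ₀) ^ 2 with hE₀
    set C : ℝ := E₀ * K / (ω * ζ₀ ^ 2) with hCdef
    have hCnn : 0 ≤ C := by positivity
    apply squeeze_zero' (Eventually.of_forall fun ζ => Real.sqrt_nonneg _)
      (g := fun ζ : ℝ => Real.sqrt C / ζ)
    · filter_upwards [eventually_ge_atTop ζ₀] with ζ hζ
      have hζpos : 0 < ζ := lt_of_lt_of_le hζ₀ hζ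
      have hb := key x₁ x₂ hx ζ hζ
      have : x₁ ζ ^ 2 + x₂ ζ ^ 2 ≤ C / ζ ^ 2 := by
        calc x₁ ζ ^ 2 + x₂ ζ ^ 2 ≤ E₀ * K / (ω * ζ₀ ^ 2 * ζ ^ 2) := hb
          _ = C / ζ ^ 2 := by rw [hCdef]; field_simp
      calc Real.sqrt (x₁ ζ ^ 2 + x₂ ζ ^ 2) ≤ Real.sqrt (C / ζ ^ 2) := Real.sqrt_le_sqrt this
        _ = Real.sqrt C / ζ := by
            rw [Real.sqrt_div hCnn, Real.sqrt_sq hζpos.le]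
    · exact tendsto_const_nhds.div_atTop tendsto_id

/-- The linear nonautonomous system x′ = A(ζ)x on [ζ₀, ∞), with
A(ζ) having rows (0, 1) and (−Ω^{1/n}/(1+1/n), −2/ζ), is asymptotically
stable at the origin: (i) Lyapunov stability and (ii) every solution tends
to 0 as ζ → ∞ (norms are Euclidean). -/
theorem laneEmden_linearized_asymptotically_stable
    (n : ℕ) (hn : 1 ≤ n) (Ω ζ₀ : ℝ) (hΩ : 0 < Ω) (hζ₀ : 0 < ζ₀) :
    (∀ ε : ℝ, 0 < ε → ∃ δ : ℝ, 0 < δ ∧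
      ∀ x₁ x₂ : ℝ → ℝ,
        (∀ ζ ∈ Set.Ici ζ₀,
          HasDerivWithinAt x₁ (x₂ ζ) (Set.Ici ζ₀) ζ ∧
          HasDerivWithinAt x₂
            (-(Ω ^ (1 / (n : ℝ)) / (1 + 1 / (n : ℝ))) * x₁ ζ - (2 / ζ) * x₂ ζ)
            (Set.Ici ζ₀) ζ) →
        Real.sqrt (x₁ ζ₀ ^ 2 + x₂ ζ₀ ^ 2) < δ →
        ∀ ζ : ℝ, ζ₀ ≤ ζ → Real.sqrt (x₁ ζ ^ 2 + x₂ ζ ^ 2) < ε) ∧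
    (∀ x₁ x₂ : ℝ → ℝ,
      (∀ ζ ∈ Set.Ici ζ₀,
        HasDerivWithinAt x₁ (x₂ ζ) (Set.Ici ζ₀) ζ ∧
        HasDerivWithinAt x₂
          (-(Ω ^ (1 / (n : ℝ)) / (1 + 1 / (n : ℝ))) * x₁ ζ - (2 / ζ) * x₂ ζ)
          (Set.Ici ζ₀) ζ) →
      Tendsto (fun ζ : ℝ => Real.sqrt (x₁ ζ ^ 2 + x₂ ζ ^ 2)) atTop (nhds 0)) := by
  have hinv : (0:ℝ) < 1 + 1 / (n : ℝ) := by positivity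
  have hω : 0 < Ω ^ (1 / (n : ℝ)) / (1 + 1 / (n : ℝ)) :=
    div_pos (Real.rpow_pos_of_pos hΩ _) hinv
  exact laneEmden_aux _ ζ₀ hω hζ₀
end

section
/- Let n ≥ 2 be an even natural number, Ω > 0, ζ₀ > 0, and let x = (x₁, x₂) : [ζ₀, ∞) → ℝ² be a solution of the shifted even system. Then the function ζ ↦ V(x₁(ζ), x₂(ζ)) is differentiable on [ζ₀, ∞) with derivative equal to −4·x₂(ζ)²/ζ; in particular, ζ ↦ V(x(ζ)) is nonincreasing. -/
/-- A solution on [ζ₀, ∞) of the shifted even system arising from the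
generalized Lane–Emden equation with γ = 1 + 1/n: x₁′ = x₂,
x₂′ = (1/(n+1))·(Ω·(x₁ − Ω^{−1/n})ⁿ − 1) − 2x₂/ζ. -/
def IsSolShiftedEven (n : ℕ) (Ω ζ₀ : ℝ) (x₁ x₂ : ℝ → ℝ) : Prop :=
  ∀ ζ ∈ Set.Ici ζ₀,
    HasDerivWithinAt x₁ (x₂ ζ) (Set.Ici ζ₀) ζ ∧
    HasDerivWithinAt x₂
      ((1 / ((n : ℝ) + 1)) * (Ω * (x₁ ζ - Ω ^ (-1 / (n : ℝ))) ^ n - 1)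
        - 2 * x₂ ζ / ζ)
      (Set.Ici ζ₀) ζ

/-- The Lyapunov function
V(x₁,x₂) = −(2Ω/(n+1)²)((x₁ − Ω^{−1/n})^{n+1} + Ω^{−(n+1)/n}) + (2/(n+1))x₁ + x₂². -/
noncomputable def lyapV (n : ℕ) (Ω : ℝ) (x₁ x₂ : ℝ) : ℝ :=
  -(2 * Ω / ((n : ℝ) + 1) ^ 2) *
      ((x₁ - Ω ^ (-1 / (n : ℝ))) ^ (n + 1) + Ω ^ (-((n : ℝ) + 1) / (n : ℝ)))
    + (2 / ((n : ℝ) + 1)) * x₁ + x₂ ^ 2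

/-- Along any solution of the shifted even system, the Lyapunov
function V is differentiable with derivative −4x₂²/ζ; in particular
ζ ↦ V(x(ζ)) is nonincreasing on [ζ₀, ∞). -/
theorem laneEmden_lyapunov_derivative
    (n : ℕ) (hn : 2 ≤ n) (hne : Even n) (Ω ζ₀ : ℝ) (hΩ : 0 < Ω) (hζ₀ : 0 < ζ₀)
    (x₁ x₂ : ℝ → ℝ) (hx : IsSolShiftedEven n Ω ζ₀ x₁ x₂) :
    (∀ ζ ∈ Set.Ici ζ₀,
      HasDerivWithinAt (fun s : ℝ => lyapV n Ω (x₁ s) (x₂ s))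
        (-4 * x₂ ζ ^ 2 / ζ) (Set.Ici ζ₀) ζ) ∧
    AntitoneOn (fun s : ℝ => lyapV n Ω (x₁ s) (x₂ s)) (Set.Ici ζ₀) := by
  have key : ∀ ζ ∈ Set.Ici ζ₀,
      HasDerivWithinAt (fun s : ℝ => lyapV n Ω (x₁ s) (x₂ s))
        (-4 * x₂ ζ ^ 2 / ζ) (Set.Ici ζ₀) ζ := by
    intro ζ hζ
    have hζpos : (0:ℝ) < ζ := lt_of_lt_of_le hζ₀ hζ
    have h1 := (hx ζ hζ).1
    have h2 := (hx ζ hζ).2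
    set c := Ω ^ (-1 / (n : ℝ)) with hc
    have hpow : HasDerivWithinAt (fun s => (x₁ s - c) ^ (n + 1))
        ((↑(n+1) : ℝ) * (x₁ ζ - c) ^ n * x₂ ζ) (Set.Ici ζ₀) ζ := by
      simpa using ((h1.sub_const c).fun_pow (n+1))
    have hV : HasDerivWithinAt (fun s : ℝ => lyapV n Ω (x₁ s) (x₂ s))
        (-(2 * Ω / ((n : ℝ) + 1) ^ 2) * ((↑(n+1) : ℝ) * (x₁ ζ - c) ^ n * x₂ ζ)
          + (2 / ((n : ℝ) + 1)) * x₂ ζ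
          + 2 * x₂ ζ * ((1 / ((n : ℝ) + 1)) * (Ω * (x₁ ζ - c) ^ n - 1)
              - 2 * x₂ ζ / ζ)) (Set.Ici ζ₀) ζ := by
      unfold lyapV
      have := (((hpow.add_const (Ω ^ (-((n : ℝ) + 1) / (n : ℝ)))).const_mul
          (-(2 * Ω / ((n : ℝ) + 1) ^ 2))).fun_add (h1.const_mul (2 / ((n : ℝ) + 1)))).fun_add
          ((h2.fun_pow 2))
      refine this.congr_deriv ?_
      push_cast
      ring
    convert hV using 1
    have hn1 : ((n : ℝ) + 1) ≠ 0 := by positivity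
    field_simp
    push_cast
    ring
  refine ⟨key, ?_⟩
  apply antitoneOn_of_deriv_nonpos (convex_Ici ζ₀)
  · intro ζ hζ
    exact (key ζ hζ).continuousWithinAt
  · intro ζ hζ
    rw [interior_Ici] at hζ
    exact ((key ζ (le_of_lt (Set.mem_Ioi.mp hζ))).hasDerivAt (Ici_mem_nhds hζ)).differentiableAt.differentiableWithinAt
  · intro ζ hζ
    rw [interior_Ici] at hζ
    have hd : HasDerivAt (fun s : ℝ => lyapV n Ω (x₁ s) (x₂ s)) (-4 * x₂ ζ ^ 2 / ζ) ζ :=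
      (key ζ (le_of_lt (Set.mem_Ioi.mp hζ))).hasDerivAt (Ici_mem_nhds hζ)
    rw [hd.deriv]
    have hζpos : (0:ℝ) < ζ := lt_of_lt_of_le hζ₀ (le_of_lt hζ)
    have h4 : -4 * x₂ ζ ^ 2 ≤ 0 := by nlinarith [sq_nonneg (x₂ ζ)]
    exact div_nonpos_of_nonpos_of_nonneg h4 (le_of_lt hζpos)
end

section
/- Let n ≥ 2 be an even natural number and Ω > 0. Then the origin is a uniformly Lyapunov stable equilibrium of the shifted even system: for every ε > 0 there exists δ > 0, independent of ζ₀, such that for every ζ₀ > 0 and every solution x : [ζ₀, ∞) → ℝ² of the shifted even system with ‖x(ζ₀)‖ < δ, one has ‖x(ζ)‖ < ε for all ζ ≥ ζ₀. -/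
set_option maxHeartbeats 1000000

open Set

/-- For n ≥ 2 even and Ω > 0, the origin is a uniformly
Lyapunov stable equilibrium of the shifted even system: for every ε > 0 there
is δ > 0, independent of ζ₀, such that any solution starting (at any ζ₀ > 0)
within Euclidean distance δ of the origin stays within distance ε. -/
theorem laneEmden_origin_uniformly_stable
    (n : ℕ) (hn : 2 ≤ n) (hne : Even n) (Ω : ℝ) (hΩ : 0 < Ω) :
    ∀ ε : ℝ, 0 < ε → ∃ δ : ℝ, 0 < δ ∧
      ∀ ζ₀ : ℝ, 0 < ζ₀ →
        ∀ x₁ x₂ : ℝ → ℝ, IsSolShiftedEven n Ω ζ₀ x₁ x₂ →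
          Real.sqrt (x₁ ζ₀ ^ 2 + x₂ ζ₀ ^ 2) < δ →
          ∀ ζ : ℝ, ζ₀ ≤ ζ → Real.sqrt (x₁ ζ ^ 2 + x₂ ζ ^ 2) < ε := by
  intro ε hε
  have hn0 : (n:ℝ) ≠ 0 := Nat.cast_ne_zero.mpr (by omega)
  have hm : (0:ℝ) < (n:ℝ) + 1 := by positivity
  set a : ℝ := Ω ^ (-1 / (n : ℝ)) with ha_def
  have ha : 0 < a := Real.rpow_pos_of_pos hΩ _
  have hΩa : Ω * a ^ n = 1 := by
    rw [ha_def, ← Real.rpow_natCast (Ω ^ (-1/(n:ℝ))) n, ← Real.rpow_mul hΩ.le,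
      div_mul_cancel₀ _ hn0, Real.rpow_neg_one]
    exact mul_inv_cancel₀ hΩ.ne'
  set U : ℝ → ℝ :=
    fun t => (t - Ω * ((t - a)^(n+1) - (-a)^(n+1)) / ((n:ℝ)+1)) / ((n:ℝ)+1) with hU_def
  have hU0 : U 0 = 0 := by simp [hU_def]
  set F : ℝ → ℝ := fun t => (1 - Ω * (t - a)^n) / ((n:ℝ)+1) with hF_def
  have hUderiv : ∀ t, HasDerivAt U (F t) t := by
    intro t
    have h1 : HasDerivAt (fun t : ℝ => t - a) 1 t := (hasDerivAt_id t).sub_const a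
    have h2 : HasDerivAt (fun t : ℝ => (t - a)^(n+1) - (-a)^(n+1))
        (((n:ℝ)+1) * (t - a)^n) t := by
      have := (h1.pow (n+1)).sub_const ((-a)^(n+1))
      simpa using this
    have h3 := (((hasDerivAt_id t).sub ((h2.const_mul Ω).div_const ((n:ℝ)+1))).div_const
      ((n:ℝ)+1))
    refine h3.congr_deriv ?_
    rw [hF_def]
    field_simp
  have hUcont : Continuous U := by
    have : Differentiable ℝ U := fun t => (hUderiv t).differentiableAt
    exact this.continuous
  -- sign of F
  have hFpos : ∀ t : ℝ, 0 < t → t < 2*a → 0 < F t := by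
    intro t ht1 ht2
    have habs : |t - a| < a := abs_lt.mpr ⟨by linarith, by linarith⟩
    have h1 : (t-a)^n < a^n := by
      calc (t-a)^n = |t-a|^n := (hne.pow_abs _).symm
        _ < a^n := pow_lt_pow_left₀ habs (abs_nonneg _) (by omega)
    have h2 : Ω * (t-a)^n < 1 := by
      calc Ω * (t-a)^n < Ω * a^n := by exact (mul_lt_mul_iff_right₀ hΩ).mpr h1
        _ = 1 := hΩa
    rw [hF_def]
    exact div_pos (by linarith) hm
  have hFneg : ∀ t : ℝ, t < 0 → F t < 0 := by
    intro t ht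
    have h1 : a^n < (t-a)^n := by
      calc a^n < |t-a|^n := by
            apply pow_lt_pow_left₀ _ ha.le (by omega)
            rw [abs_of_nonpos (by linarith)]; linarith
        _ = (t-a)^n := hne.pow_abs _
    have h2 : 1 < Ω * (t-a)^n := by
      calc 1 = Ω * a^n := hΩa.symm
        _ < Ω * (t-a)^n := (mul_lt_mul_iff_right₀ hΩ).mpr h1
    rw [hF_def]
    exact div_neg_of_neg_of_pos (by linarith) hm
  -- monotonicity of U
  have hUmono : StrictMonoOn U (Icc 0 a) := by
    apply strictMonoOn_of_deriv_pos (convex_Icc 0 a) hUcont.continuousOn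
    intro t ht
    rw [interior_Icc] at ht
    rw [(hUderiv t).deriv]
    exact hFpos t ht.1 (by linarith [ht.2])
  have hUanti : StrictAntiOn U (Icc (-a) 0) := by
    apply strictAntiOn_of_deriv_neg (convex_Icc (-a) 0) hUcont.continuousOn
    intro t ht
    rw [interior_Icc] at ht
    rw [(hUderiv t).deriv]
    exact hFneg t ht.2
  have hUnonneg : ∀ t : ℝ, |t| ≤ a → 0 ≤ U t := by
    intro t ht
    rcases le_or_gt 0 t with h | h
    · have := hUmono.monotoneOn (left_mem_Icc.mpr ha.le) ⟨h, (abs_le.mp ht).2⟩ h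
      rwa [hU0] at this
    · have := hUanti.antitoneOn ⟨(abs_le.mp ht).1, h.le⟩ (right_mem_Icc.mpr (by linarith)) h.le
      rwa [hU0] at this
  -- constants
  set r : ℝ := min (ε/2) a with hr_def
  have hr : 0 < r := lt_min (by positivity) ha
  have hra : r ≤ a := min_le_right _ _
  have hUr : 0 < U r := by
    have := hUmono (left_mem_Icc.mpr ha.le) ⟨hr.le, hra⟩ hr
    rwa [hU0] at this
  have hUr' : 0 < U (-r) := by
    have := hUanti (show (-r) ∈ Icc (-a) 0 from ⟨by linarith, by linarith⟩)
      (right_mem_Icc.mpr (by linarith)) (by linarith)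
    rwa [hU0] at this
  set c : ℝ := min (min (U r) (U (-r))) (ε^2/4) with hc_def
  have hc : 0 < c := lt_min (lt_min hUr hUr') (by positivity)
  obtain ⟨δ₁, hδ₁, hδ₁'⟩ := Metric.continuousAt_iff.mp hUcont.continuousAt (c/2) (by positivity)
  refine ⟨min δ₁ (min r (Real.sqrt c / 2)),
    lt_min hδ₁ (lt_min hr (by positivity)), ?_⟩
  intro ζ₀ hζ₀ x₁ x₂ hsol hinit ζ hζ
  set δ : ℝ := min δ₁ (min r (Real.sqrt c / 2)) with hδ_def
  have hδr : δ ≤ r := le_trans (min_le_right _ _) (min_le_left _ _)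
  have hδ1 : δ ≤ δ₁ := min_le_left _ _
  have hδs : δ ≤ Real.sqrt c / 2 := le_trans (min_le_right _ _) (min_le_right _ _)
  -- continuity of solution
  have hx1cont : ContinuousOn x₁ (Ici ζ₀) := fun s hs => ((hsol s hs).1).continuousWithinAt
  -- energy function
  set h : ℝ → ℝ := fun s => (x₂ s)^2/2 + U (x₁ s) with hh_def
  have hhderiv : ∀ s ∈ Ici ζ₀, HasDerivWithinAt h (-(2 * (x₂ s)^2 / s)) (Ici ζ₀) s := by
    intro s hs
    obtain ⟨h1, h2⟩ := hsol s hs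
    have hs0 : s ≠ 0 := by have := lt_of_lt_of_le hζ₀ hs; linarith
    have hA : HasDerivWithinAt (fun s => (x₂ s)^2/2)
        ((2 * x₂ s ^ 1 * ((1 / ((n : ℝ) + 1)) * (Ω * (x₁ s - a) ^ n - 1)
          - 2 * x₂ s / s)) / 2) (Ici ζ₀) s := (h2.pow 2).div_const 2
    have hB : HasDerivWithinAt (fun s => U (x₁ s)) (F (x₁ s) * x₂ s) (Ici ζ₀) s :=
      (hUderiv (x₁ s)).comp_hasDerivWithinAt s h1
    have hC := hA.add hB
    refine hC.congr_deriv ?_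
    rw [hF_def]
    field_simp
    ring
  have hanti : AntitoneOn h (Ici ζ₀) := by
    apply antitoneOn_of_deriv_nonpos (convex_Ici ζ₀)
    · exact fun s hs => (hhderiv s hs).continuousWithinAt
    · intro s hs
      rw [interior_Ici] at hs
      exact (((hhderiv s (mem_Ici.mpr (le_of_lt hs))).hasDerivAt
        (Ici_mem_nhds hs)).differentiableAt).differentiableWithinAt
    · intro s hs
      rw [interior_Ici] at hs
      rw [((hhderiv s (mem_Ici.mpr (le_of_lt hs))).hasDerivAt (Ici_mem_nhds hs)).deriv]
      have hs0 : 0 < s := lt_trans hζ₀ hs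
      have : 0 ≤ 2 * (x₂ s)^2 / s := by positivity
      linarith
  -- initial bounds
  have key : ∀ y z : ℝ, Real.sqrt (y^2 + z^2) < δ → |y| < δ ∧ |z| < δ := by
    intro y z hyz
    constructor
    · calc |y| = Real.sqrt (y^2) := (Real.sqrt_sq_eq_abs y).symm
        _ ≤ Real.sqrt (y^2 + z^2) := Real.sqrt_le_sqrt (by nlinarith [sq_nonneg z])
        _ < δ := hyz
    · calc |z| = Real.sqrt (z^2) := (Real.sqrt_sq_eq_abs z).symm
        _ ≤ Real.sqrt (y^2 + z^2) := Real.sqrt_le_sqrt (by nlinarith [sq_nonneg y])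
        _ < δ := hyz
  obtain ⟨hx10, hx20⟩ := key _ _ hinit
  have hh0 : h ζ₀ < c := by
    have hU1 : |U (x₁ ζ₀)| < c/2 := by
      have := hδ₁' (x := x₁ ζ₀) (by rw [Real.dist_eq, sub_zero]; exact lt_of_lt_of_le hx10 hδ1)
      rwa [Real.dist_eq, hU0, sub_zero] at this
    have hx2sq : (x₂ ζ₀)^2 < c/4 := by
      have h1 : |x₂ ζ₀| < Real.sqrt c / 2 := lt_of_lt_of_le hx20 hδs
      have h2 : (x₂ ζ₀)^2 = |x₂ ζ₀|^2 := (sq_abs _).symm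
      have h3 : |x₂ ζ₀|^2 < (Real.sqrt c / 2)^2 :=
        pow_lt_pow_left₀ h1 (abs_nonneg _) (by norm_num)
      have h4 : (Real.sqrt c / 2)^2 = c/4 := by
        rw [div_pow, Real.sq_sqrt hc.le]; norm_num
      linarith
    have := abs_lt.mp hU1
    rw [hh_def]
    simp only
    linarith
  -- the trajectory stays in |x₁| < r
  have hAbs : ∀ s, ζ₀ ≤ s → |x₁ s| < r := by
    intro s hs
    by_contra hcon
    push_neg at hcon
    have hc1 : ContinuousOn (fun t => |x₁ t|) (Icc ζ₀ s) :=
      (hx1cont.mono Icc_subset_Ici_self).abs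
    have hiv := intermediate_value_Icc hs hc1
    obtain ⟨t, ht, ht'⟩ := hiv ⟨le_of_lt (lt_of_lt_of_le hx10 hδr), hcon⟩
    have hcUr : c ≤ U r := le_trans (min_le_left _ _) (min_le_left _ _)
    have hcUr' : c ≤ U (-r) := le_trans (min_le_left _ _) (min_le_right _ _)
    have hUt : c ≤ U (x₁ t) := by
      rcases (abs_eq hr.le).mp ht' with h | h
      · rw [h]; exact hcUr
      · rw [h]; exact hcUr'
    have hht : h t ≤ h ζ₀ := hanti (self_mem_Ici) ht.1 ht.1
    have hUh : U (x₁ t) ≤ h t := by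
      rw [hh_def]; simp only; nlinarith [sq_nonneg (x₂ t)]
    linarith
  -- conclude
  have hx1ζ : |x₁ ζ| < r := hAbs ζ hζ
  have hUζ : 0 ≤ U (x₁ ζ) := hUnonneg _ (le_trans hx1ζ.le hra)
  have hhζ : h ζ ≤ h ζ₀ := hanti self_mem_Ici hζ hζ
  have hcε : c ≤ ε^2/4 := min_le_right _ _
  have hx2sq : (x₂ ζ)^2 ≤ ε^2/2 := by
    simp only [hh_def] at hhζ hh0
    linarith
  have hx1sq : (x₁ ζ)^2 < ε^2/4 := by
    have h1 : |x₁ ζ| < ε/2 := lt_of_lt_of_le hx1ζ (min_le_left _ _)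
    nlinarith [abs_nonneg (x₁ ζ), sq_abs (x₁ ζ)]
  rw [show ε = Real.sqrt (ε^2) from (Real.sqrt_sq hε.le).symm]
  apply Real.sqrt_lt_sqrt (by positivity)
  nlinarith
end

section
/- Let n ≥ 2 be an even natural number, 0 < Ω < 1, and ζ₀ > 0. Then the origin of the shifted even system is asymptotically stable: it is Lyapunov stable, and there exists l > 0 such that every solution x : [ζ₀, ∞) → ℝ² of the shifted even system with ‖x(ζ₀)‖ < l satisfies x₁(ζ) → 0 and x₂(ζ) → 0 as ζ → ∞. -/
open Filter Set

namespace LEaux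


noncomputable def aL (n : ℕ) (Ω : ℝ) : ℝ := Ω ^ (-1 / (n : ℝ))

noncomputable def gL (n : ℕ) (Ω : ℝ) (u : ℝ) : ℝ :=
  (1 / ((n : ℝ) + 1)) * (1 - Ω * (u - aL n Ω) ^ n)

noncomputable def SL (n : ℕ) (Ω : ℝ) (u : ℝ) : ℝ :=
  ∑ i ∈ Finset.range n, (aL n Ω) ^ i * (aL n Ω - u) ^ (n - 1 - i)

noncomputable def FL (n : ℕ) (Ω : ℝ) (u : ℝ) : ℝ := ∫ t in (0:ℝ)..u, gL n Ω t

noncomputable def k1 (n : ℕ) (Ω : ℝ) : ℝ :=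
  Ω / ((n : ℝ) + 1) * ((n : ℝ) * (aL n Ω / 2) ^ (n - 1))

noncomputable def k2 (n : ℕ) (Ω : ℝ) : ℝ :=
  Ω / ((n : ℝ) + 1) * ((n : ℝ) * (3 * aL n Ω / 2) ^ (n - 1))

variable {n : ℕ} {Ω : ℝ}

lemma aL_pos (hΩ : 0 < Ω) : 0 < aL n Ω := Real.rpow_pos_of_pos hΩ _

lemma haΩ (hΩ : 0 < Ω) (hn : n ≠ 0) : Ω * (aL n Ω) ^ n = 1 := by
  have h1 : (aL n Ω) ^ n = Ω ^ ((-1 / (n : ℝ)) * n) := by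
    rw [aL, ← Real.rpow_natCast (Ω ^ (-1 / (n : ℝ))) n, ← Real.rpow_mul hΩ.le]
  have h2 : (-1 / (n : ℝ)) * n = -1 := by
    field_simp
  rw [h1, h2, Real.rpow_neg_one, mul_inv_cancel₀ hΩ.ne']

lemma g_eq (hne : Even n) (hΩ : 0 < Ω) (hn : n ≠ 0) (u : ℝ) :
    gL n Ω u = Ω / ((n : ℝ) + 1) * (u * SL n Ω u) := by
  have hpow : (u - aL n Ω) ^ n = (aL n Ω - u) ^ n := by
    rw [show u - aL n Ω = -(aL n Ω - u) by ring, hne.neg_pow]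
  have hsum : SL n Ω u * (aL n Ω - (aL n Ω - u)) = (aL n Ω) ^ n - (aL n Ω - u) ^ n :=
    geom_sum₂_mul _ _ n
  have h1 : Ω * (aL n Ω) ^ n = 1 := haΩ hΩ hn
  rw [gL, hpow]
  have : u * SL n Ω u = (aL n Ω) ^ n - (aL n Ω - u) ^ n := by
    rw [← hsum]; ring
  rw [this]
  have hn1 : ((n : ℝ) + 1) ≠ 0 := by positivity
  field_simp
  ring_nf
  nlinarith [h1]


noncomputable def EL (n : ℕ) (Ω : ℝ) (x₁ x₂ : ℝ → ℝ) (t : ℝ) : ℝ :=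
  x₂ t ^ 2 / 2 + FL n Ω (x₁ t)

variable {n : ℕ} {Ω : ℝ}

lemma SL_lower (hΩ : 0 < Ω) {u : ℝ} (hu : u ≤ aL n Ω / 2) :
    (n : ℝ) * (aL n Ω / 2) ^ (n - 1) ≤ SL n Ω u := by
  have ha : 0 < aL n Ω := Real.rpow_pos_of_pos hΩ _
  have h : ∀ i ∈ Finset.range n,
      (aL n Ω / 2) ^ (n - 1) ≤ (aL n Ω) ^ i * (aL n Ω - u) ^ (n - 1 - i) := by
    intro i hi
    have hi' : i ≤ n - 1 := by
      have := Finset.mem_range.mp hi; omega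
    have hsplit : i + (n - 1 - i) = n - 1 := by omega
    calc (aL n Ω / 2) ^ (n - 1) = (aL n Ω / 2) ^ i * (aL n Ω / 2) ^ (n - 1 - i) := by
          rw [← pow_add, hsplit]
      _ ≤ (aL n Ω) ^ i * (aL n Ω - u) ^ (n - 1 - i) := by
          apply mul_le_mul (pow_le_pow_left₀ (by linarith) (by linarith) i)
            (pow_le_pow_left₀ (by linarith) (by linarith) _) (by positivity) (by positivity)
  calc (n : ℝ) * (aL n Ω / 2) ^ (n - 1)
      = ∑ _i ∈ Finset.range n, (aL n Ω / 2) ^ (n - 1) := by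
        rw [Finset.sum_const, Finset.card_range, nsmul_eq_mul]
    _ ≤ SL n Ω u := Finset.sum_le_sum h

lemma SL_upper (hΩ : 0 < Ω) {u : ℝ} (hu : u ≤ aL n Ω / 2) (hu' : -(aL n Ω / 2) ≤ u) :
    SL n Ω u ≤ (n : ℝ) * (3 * aL n Ω / 2) ^ (n - 1) := by
  have ha : 0 < aL n Ω := Real.rpow_pos_of_pos hΩ _
  have h : ∀ i ∈ Finset.range n,
      (aL n Ω) ^ i * (aL n Ω - u) ^ (n - 1 - i) ≤ (3 * aL n Ω / 2) ^ (n - 1) := by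
    intro i hi
    have hi' : i ≤ n - 1 := by
      have := Finset.mem_range.mp hi; omega
    have hsplit : i + (n - 1 - i) = n - 1 := by omega
    calc (aL n Ω) ^ i * (aL n Ω - u) ^ (n - 1 - i)
        ≤ (3 * aL n Ω / 2) ^ i * (3 * aL n Ω / 2) ^ (n - 1 - i) := by
          apply mul_le_mul (pow_le_pow_left₀ (by linarith) (by linarith) i)
            (pow_le_pow_left₀ (by linarith) (by linarith) _) (pow_nonneg (by linarith) _) (by positivity)
      _ = (3 * aL n Ω / 2) ^ (n - 1) := by rw [← pow_add, hsplit]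
  calc SL n Ω u ≤ ∑ _i ∈ Finset.range n, (3 * aL n Ω / 2) ^ (n - 1) := Finset.sum_le_sum h
    _ = (n : ℝ) * (3 * aL n Ω / 2) ^ (n - 1) := by
        rw [Finset.sum_const, Finset.card_range, nsmul_eq_mul]


variable {n : ℕ} {Ω : ℝ}

lemma k1_pos (hΩ : 0 < Ω) (hn : n ≠ 0) : 0 < k1 n Ω := by
  have ha : 0 < aL n Ω := Real.rpow_pos_of_pos hΩ _
  have hnn : (0:ℝ) < n := by exact_mod_cast Nat.pos_of_ne_zero hn
  exact mul_pos (by positivity) (mul_pos hnn (by positivity))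

lemma k1_le_k2 (hΩ : 0 < Ω) : k1 n Ω ≤ k2 n Ω := by
  have ha : 0 < aL n Ω := Real.rpow_pos_of_pos hΩ _
  apply mul_le_mul_of_nonneg_left _ (by positivity)
  apply mul_le_mul_of_nonneg_left _ (by positivity)
  exact pow_le_pow_left₀ (by linarith) (by linarith) _

lemma gL_cont : Continuous (gL n Ω) := by
  unfold gL
  fun_prop

section gbounds
variable (hne : Even n) (hΩ : 0 < Ω) (hn : n ≠ 0)
include hne hΩ hn

lemma ug_lower {u : ℝ} (hu : u ≤ aL n Ω / 2) :
    k1 n Ω * u ^ 2 ≤ u * gL n Ω u := by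
  have h := SL_lower (n := n) hΩ hu
  have hc : (0:ℝ) ≤ Ω / ((n : ℝ) + 1) := by positivity
  have : u * gL n Ω u = Ω / ((n : ℝ) + 1) * (u ^ 2 * SL n Ω u) := by
    rw [g_eq hne hΩ hn]; ring
  rw [this, k1]
  have := mul_le_mul_of_nonneg_left h (sq_nonneg u)
  nlinarith [this, hc, sq_nonneg u]

lemma g_le_of_nonneg {u : ℝ} (h0 : 0 ≤ u) (hu : u ≤ aL n Ω / 2) :
    gL n Ω u ≤ k2 n Ω * u := by
  have ha : 0 < aL n Ω := Real.rpow_pos_of_pos hΩ _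
  have h := SL_upper (n := n) hΩ hu (by linarith)
  have hc : (0:ℝ) ≤ Ω / ((n : ℝ) + 1) := by positivity
  rw [g_eq hne hΩ hn, k2]
  have := mul_le_mul_of_nonneg_left h h0
  nlinarith [this, hc]

lemma g_ge_of_nonneg {u : ℝ} (h0 : 0 ≤ u) (hu : u ≤ aL n Ω / 2) :
    k1 n Ω * u ≤ gL n Ω u := by
  have h := SL_lower (n := n) hΩ hu
  have hc : (0:ℝ) ≤ Ω / ((n : ℝ) + 1) := by positivity
  rw [g_eq hne hΩ hn, k1]
  have := mul_le_mul_of_nonneg_left h h0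
  nlinarith [this, hc]

lemma g_le_of_nonpos {u : ℝ} (h0 : u ≤ 0) (hu' : -(aL n Ω / 2) ≤ u) :
    gL n Ω u ≤ k1 n Ω * u := by
  have ha : 0 < aL n Ω := Real.rpow_pos_of_pos hΩ _
  have h := SL_lower (n := n) hΩ (u := u) (by linarith)
  have hc : (0:ℝ) ≤ Ω / ((n : ℝ) + 1) := by positivity
  rw [g_eq hne hΩ hn, k1]
  have := mul_le_mul_of_nonpos_left h (by linarith : u ≤ 0)
  nlinarith [this, hc]

lemma g_ge_of_nonpos {u : ℝ} (h0 : u ≤ 0) (hu' : -(aL n Ω / 2) ≤ u) :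
    k2 n Ω * u ≤ gL n Ω u := by
  have ha : 0 < aL n Ω := Real.rpow_pos_of_pos hΩ _
  have h := SL_upper (n := n) hΩ (u := u) (by linarith) hu'
  have hc : (0:ℝ) ≤ Ω / ((n : ℝ) + 1) := by positivity
  rw [g_eq hne hΩ hn, k2]
  have := mul_le_mul_of_nonpos_left h (by linarith : u ≤ 0)
  nlinarith [this, hc]

end gbounds

lemma FL_hasDerivAt (u : ℝ) : HasDerivAt (FL n Ω) (gL n Ω u) u :=
  intervalIntegral.integral_hasDerivAt_right (gL_cont.intervalIntegrable 0 u)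
    (gL_cont.stronglyMeasurableAtFilter _ _) gL_cont.continuousAt

lemma FL_bounds (hne : Even n) (hΩ : 0 < Ω) (hn : n ≠ 0) {u : ℝ}
    (hu : |u| ≤ aL n Ω / 2) :
    k1 n Ω / 2 * u ^ 2 ≤ FL n Ω u ∧ FL n Ω u ≤ k2 n Ω / 2 * u ^ 2 := by
  have hu1 : u ≤ aL n Ω / 2 := le_trans (le_abs_self u) hu
  have hu2 : -(aL n Ω / 2) ≤ u := neg_le_of_abs_le hu
  have hint : ∀ (c : ℝ) (x y : ℝ), ∫ t in x..y, c * t = c * (y ^ 2 - x ^ 2) / 2 := by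
    intro c x y
    rw [intervalIntegral.integral_const_mul, integral_id]; ring
  rcases le_or_gt 0 u with h0 | h0
  · constructor
    · have hmono : ∫ t in (0:ℝ)..u, k1 n Ω * t ≤ ∫ t in (0:ℝ)..u, gL n Ω t := by
        apply intervalIntegral.integral_mono_on h0
          ((continuous_const.mul continuous_id).intervalIntegrable _ _)
          (gL_cont.intervalIntegrable _ _)
        intro t ht
        exact g_ge_of_nonneg hne hΩ hn ht.1 (le_trans ht.2 hu1)
      rw [FL]
      calc k1 n Ω / 2 * u ^ 2 = ∫ t in (0:ℝ)..u, k1 n Ω * t := by rw [hint]; ring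
        _ ≤ _ := hmono
    · have hmono : ∫ t in (0:ℝ)..u, gL n Ω t ≤ ∫ t in (0:ℝ)..u, k2 n Ω * t := by
        apply intervalIntegral.integral_mono_on h0
          (gL_cont.intervalIntegrable _ _)
          ((continuous_const.mul continuous_id).intervalIntegrable _ _)
        intro t ht
        exact g_le_of_nonneg hne hΩ hn ht.1 (le_trans ht.2 hu1)
      rw [FL]
      calc (∫ t in (0:ℝ)..u, gL n Ω t) ≤ ∫ t in (0:ℝ)..u, k2 n Ω * t := hmono
        _ = k2 n Ω / 2 * u ^ 2 := by rw [hint]; ring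
  · have hsymm : FL n Ω u = -∫ t in u..(0:ℝ), gL n Ω t := by
      rw [FL, intervalIntegral.integral_symm]
    constructor
    · have hmono : ∫ t in u..(0:ℝ), gL n Ω t ≤ ∫ t in u..(0:ℝ), k1 n Ω * t := by
        apply intervalIntegral.integral_mono_on h0.le
          (gL_cont.intervalIntegrable _ _)
          ((continuous_const.mul continuous_id).intervalIntegrable _ _)
        intro t ht
        exact g_le_of_nonpos hne hΩ hn ht.2 (le_trans hu2 ht.1)
      rw [hsymm]
      have : ∫ t in u..(0:ℝ), k1 n Ω * t = -(k1 n Ω / 2 * u ^ 2) := by rw [hint]; ring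
      linarith [hmono, this.symm ▸ hmono]
    · have hmono : ∫ t in u..(0:ℝ), k2 n Ω * t ≤ ∫ t in u..(0:ℝ), gL n Ω t := by
        apply intervalIntegral.integral_mono_on h0.le
          ((continuous_const.mul continuous_id).intervalIntegrable _ _)
          (gL_cont.intervalIntegrable _ _)
        intro t ht
        exact g_ge_of_nonpos hne hΩ hn ht.2 (le_trans hu2 ht.1)
      rw [hsymm]
      have h2 : ∫ t in u..(0:ℝ), k2 n Ω * t = -(k2 n Ω / 2 * u ^ 2) := by rw [hint]; ring
      linarith [hmono, h2 ▸ hmono]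


variable {n : ℕ} {Ω ζ₀ : ℝ} {x₁ x₂ : ℝ → ℝ}

lemma d2_eq (n : ℕ) (Ω : ℝ) (y₁ y₂ : ℝ → ℝ) (ζ : ℝ) :
    (1 / ((n : ℝ) + 1)) * (Ω * (y₁ ζ - Ω ^ (-1 / (n : ℝ))) ^ n - 1) - 2 * y₂ ζ / ζ
      = -gL n Ω (y₁ ζ) - 2 * y₂ ζ / ζ := by
  rw [gL, aL]; ring

lemma EL_deriv (hζ₀ : 0 < ζ₀) (hx : IsSolShiftedEven n Ω ζ₀ x₁ x₂)
    {ζ : ℝ} (hζ : ζ ∈ Ici ζ₀) :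
    HasDerivWithinAt (EL n Ω x₁ x₂) (-2 * x₂ ζ ^ 2 / ζ) (Ici ζ₀) ζ := by
  obtain ⟨h1, h2⟩ := hx ζ hζ
  rw [d2_eq n Ω x₁ x₂ ζ] at h2
  have hζpos : 0 < ζ := lt_of_lt_of_le hζ₀ hζ
  have hsq : HasDerivWithinAt (fun t => x₂ t ^ 2 / 2)
      (x₂ ζ * (-gL n Ω (x₁ ζ) - 2 * x₂ ζ / ζ)) (Ici ζ₀) ζ := by
    have := (h2.pow 2).div_const 2
    refine this.congr_deriv ?_
    ring
  have hFc : HasDerivWithinAt (fun t => FL n Ω (x₁ t)) (gL n Ω (x₁ ζ) * x₂ ζ) (Ici ζ₀) ζ :=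
    (FL_hasDerivAt (x₁ ζ)).comp_hasDerivWithinAt ζ h1
  have := hsq.add hFc
  refine this.congr_deriv ?_
  field_simp
  ring

lemma EL_anti (hζ₀ : 0 < ζ₀) (hx : IsSolShiftedEven n Ω ζ₀ x₁ x₂) :
    AntitoneOn (EL n Ω x₁ x₂) (Ici ζ₀) := by
  apply antitoneOn_of_deriv_nonpos (convex_Ici ζ₀)
  · exact fun ζ hζ => (EL_deriv hζ₀ hx hζ).continuousWithinAt
  · rw [interior_Ici]
    intro ζ hζ
    exact ((EL_deriv hζ₀ hx (mem_Ici.mpr (le_of_lt hζ))).hasDerivAt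
      (Ici_mem_nhds hζ)).differentiableAt.differentiableWithinAt
  · rw [interior_Ici]
    intro ζ hζ
    rw [((EL_deriv hζ₀ hx (mem_Ici.mpr (le_of_lt hζ))).hasDerivAt (Ici_mem_nhds hζ)).deriv]
    have hζpos : 0 < ζ := lt_trans hζ₀ hζ
    apply div_nonpos_of_nonpos_of_nonneg _ hζpos.le
    nlinarith [sq_nonneg (x₂ ζ)]

lemma invariance (hne : Even n) (hΩ : 0 < Ω) (hnz : n ≠ 0)
    (hζ₀ : 0 < ζ₀) (hx : IsSolShiftedEven n Ω ζ₀ x₁ x₂)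
    {ρ : ℝ} (hρ : 0 < ρ) (hρr : ρ ≤ aL n Ω / 2)
    (h0 : |x₁ ζ₀| < ρ) (hE0 : EL n Ω x₁ x₂ ζ₀ < k1 n Ω / 2 * ρ ^ 2) :
    ∀ ζ, ζ₀ ≤ ζ → |x₁ ζ| < ρ := by
  by_contra hcon
  push_neg at hcon
  obtain ⟨ζ₁, hζ₁, hge⟩ := hcon
  have hcont : ContinuousOn (fun t => |x₁ t|) (Icc ζ₀ ζ₁) := by
    apply ContinuousOn.abs
    intro t ht
    exact ((hx t ht.1).1.continuousWithinAt).mono (Icc_subset_Ici_self)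
  have hmem : ρ ∈ Icc (|x₁ ζ₀|) (|x₁ ζ₁|) := ⟨h0.le, hge⟩
  obtain ⟨t, ht, habs'⟩ := intermediate_value_Icc hζ₁ hcont hmem
  have habs : |x₁ t| = ρ := habs'
  have hEt : EL n Ω x₁ x₂ t ≤ EL n Ω x₁ x₂ ζ₀ :=
    EL_anti hζ₀ hx (self_mem_Ici) ht.1 ht.1
  have htr : |x₁ t| ≤ aL n Ω / 2 := by rw [habs]; exact hρr
  have hFt : k1 n Ω / 2 * ρ ^ 2 ≤ FL n Ω (x₁ t) := by
    have := (FL_bounds hne hΩ hnz htr).1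
    rwa [← sq_abs (x₁ t), habs] at this
  have : k1 n Ω / 2 * ρ ^ 2 ≤ EL n Ω x₁ x₂ t := by
    rw [EL]
    nlinarith [sq_nonneg (x₂ t)]
  linarith


variable {n : ℕ} {Ω ζ₀ : ℝ} {x₁ x₂ : ℝ → ℝ}

lemma EL_apply (t : ℝ) : EL n Ω x₁ x₂ t = x₂ t ^ 2 / 2 + FL n Ω (x₁ t) := rfl

set_option maxHeartbeats 1000000 in
theorem asymp (hne : Even n) (hΩ : 0 < Ω) (hnz : n ≠ 0) (hζ₀ : 0 < ζ₀)
    (hx : IsSolShiftedEven n Ω ζ₀ x₁ x₂)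
    (Hreg : ∀ ζ, ζ₀ ≤ ζ → |x₁ ζ| ≤ aL n Ω / 2) :
    Tendsto x₁ atTop (nhds 0) ∧ Tendsto x₂ atTop (nhds 0) := by
  obtain ⟨K1, hK1def⟩ : ∃ K1, k1 n Ω = K1 := ⟨_, rfl⟩
  obtain ⟨K2, hK2def⟩ : ∃ K2, k2 n Ω = K2 := ⟨_, rfl⟩
  have hk1 : 0 < K1 := hK1def ▸ k1_pos hΩ hnz
  have hk12 : K1 ≤ K2 := hK1def ▸ hK2def ▸ k1_le_k2 hΩ
  obtain ⟨m, hm, hm1, hmK1⟩ : ∃ m : ℝ, 0 < m ∧ m ≤ 1 ∧ m ≤ K1 :=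
    ⟨min K1 1, lt_min hk1 one_pos, min_le_right _ _, min_le_left _ _⟩
  obtain ⟨M, hM, hM1, hK2M⟩ : ∃ M : ℝ, 0 < M ∧ (1:ℝ) ≤ M ∧ K2 ≤ M :=
    ⟨max K2 1, lt_of_lt_of_le one_pos (le_max_right _ _), le_max_right _ _, le_max_left _ _⟩
  obtain ⟨lam, hlam, hlam1, hlam2, hlam3⟩ :
      ∃ l : ℝ, 0 < l ∧ l ≤ 1 ∧ l ≤ ζ₀ * m / 2 ∧ 9 * l ≤ K1 * ζ₀ ^ 2 := by
    refine ⟨min (min 1 (ζ₀ * m / 2)) (K1 * ζ₀ ^ 2 / 9),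
      lt_min (lt_min one_pos (by positivity)) (by positivity),
      le_trans (min_le_left _ _) (min_le_left _ _),
      le_trans (min_le_left _ _) (min_le_right _ _), ?_⟩
    have := min_le_right (min 1 (ζ₀ * m / 2)) (K1 * ζ₀ ^ 2 / 9)
    linarith
  obtain ⟨c, hc, hc1, hc2⟩ : ∃ c : ℝ, 0 < c ∧ c ≤ 1/2 ∧ c ≤ lam * K1 / 2 :=
    ⟨min (1/2 : ℝ) (lam * K1 / 2), lt_min (by norm_num) (by positivity),
      min_le_left _ _, min_le_right _ _⟩
  obtain ⟨C2, hC2val⟩ : ∃ C : ℝ, M / 2 + lam / (2 * ζ₀) = C := ⟨_, rfl⟩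
  have hC2 : 0 < C2 := by rw [← hC2val]; positivity
  obtain ⟨β, hβval⟩ : ∃ b : ℝ, c / C2 = b := ⟨_, rfl⟩
  have hβ : 0 < β := by rw [← hβval]; positivity
  have hβC2 : β * C2 = c := by rw [← hβval]; exact div_mul_cancel₀ c hC2.ne'
  obtain ⟨V, hVfun⟩ : ∃ V : ℝ → ℝ,
      (fun t => EL n Ω x₁ x₂ t + lam * (x₁ t * x₂ t / t)) = V := ⟨_, rfl⟩
  obtain ⟨DV, hDVfun⟩ : ∃ D : ℝ → ℝ, (fun ζ =>
      (-2 * x₂ ζ ^ 2 + lam * (x₂ ζ ^ 2 - x₁ ζ * gL n Ω (x₁ ζ))) / ζ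
        - 3 * lam * (x₁ ζ * x₂ ζ) / ζ ^ 2) = D := ⟨_, rfl⟩
  have hVval : ∀ ζ, V ζ = EL n Ω x₁ x₂ ζ + lam * (x₁ ζ * x₂ ζ / ζ) :=
    fun ζ => by rw [← hVfun]
  have hDVval : ∀ ζ, DV ζ =
      (-2 * x₂ ζ ^ 2 + lam * (x₂ ζ ^ 2 - x₁ ζ * gL n Ω (x₁ ζ))) / ζ
        - 3 * lam * (x₁ ζ * x₂ ζ) / ζ ^ 2 := fun ζ => by rw [← hDVfun]
  -- derivative of V
  have hVder : ∀ ζ ∈ Ici ζ₀, HasDerivWithinAt V (DV ζ) (Ici ζ₀) ζ := by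
    intro ζ hζ
    have hζpos : 0 < ζ := lt_of_lt_of_le hζ₀ hζ
    have hζne : ζ ≠ 0 := hζpos.ne'
    obtain ⟨h1, h2⟩ := hx ζ hζ
    rw [d2_eq n Ω x₁ x₂ ζ] at h2
    have hmul := h1.mul h2
    have hdiv := hmul.div (hasDerivWithinAt_id ζ (Ici ζ₀)) hζne
    have hcross := hdiv.const_mul lam
    have hsum := (EL_deriv hζ₀ hx hζ).add hcross
    have hder' : HasDerivWithinAt (fun t => EL n Ω x₁ x₂ t + lam * (x₁ t * x₂ t / t))
        ((-2 * x₂ ζ ^ 2 + lam * (x₂ ζ ^ 2 - x₁ ζ * gL n Ω (x₁ ζ))) / ζ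
          - 3 * lam * (x₁ ζ * x₂ ζ) / ζ ^ 2) (Ici ζ₀) ζ := by
      refine hsum.congr_deriv ?_
      simp only [id_eq, Pi.mul_apply]
      field_simp
      ring
    rw [hVfun] at hder'
    rw [← hDVval ζ] at hder'
    exact hder'
  -- AM-GM style cross bound
  have hcross_bound : ∀ ζ, ζ₀ ≤ ζ →
      3 * lam * (|x₁ ζ| * |x₂ ζ|) / ζ₀ ≤ lam * K1 / 2 * x₁ ζ ^ 2 + 1 / 2 * x₂ ζ ^ 2 := by
    intro ζ hζ
    set A := |x₁ ζ| with hA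
    set B := |x₂ ζ| with hB
    have hA0 : 0 ≤ A := abs_nonneg _
    have hB0 : 0 ≤ B := abs_nonneg _
    have hs : 6 * (K1 * ζ₀) * (A * B) ≤ K1 ^ 2 * ζ₀ ^ 2 * A ^ 2 + 9 * B ^ 2 := by
      nlinarith [sq_nonneg (K1 * ζ₀ * A - 3 * B)]
    have hmul := mul_le_mul_of_nonneg_left hs
      (le_of_lt (by positivity : (0:ℝ) < lam / (2 * K1 * ζ₀)))
    have e1 : lam / (2 * K1 * ζ₀) * (6 * (K1 * ζ₀) * (A * B)) = 3 * lam * (A * B) := by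
      field_simp; ring
    have e2 : lam / (2 * K1 * ζ₀) * (K1 ^ 2 * ζ₀ ^ 2 * A ^ 2 + 9 * B ^ 2)
        = lam * K1 * ζ₀ / 2 * A ^ 2 + 9 * lam / (2 * K1 * ζ₀) * B ^ 2 := by
      field_simp
    rw [e1, e2] at hmul
    have e3 : 9 * lam / (2 * K1 * ζ₀) ≤ ζ₀ / 2 := by
      rw [div_le_div_iff₀ (by positivity) (by norm_num)]
      ring_nf
      nlinarith [hlam3]
    have e4 : 9 * lam / (2 * K1 * ζ₀) * B ^ 2 ≤ ζ₀ / 2 * B ^ 2 :=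
      mul_le_mul_of_nonneg_right e3 (sq_nonneg B)
    have hfin : 3 * lam * (A * B) ≤ lam * K1 * ζ₀ / 2 * A ^ 2 + ζ₀ / 2 * B ^ 2 := by
      linarith
    have hdv := (div_le_div_iff_of_pos_right hζ₀).mpr hfin
    calc 3 * lam * (A * B) / ζ₀ ≤ (lam * K1 * ζ₀ / 2 * A ^ 2 + ζ₀ / 2 * B ^ 2) / ζ₀ := hdv
      _ = lam * K1 / 2 * A ^ 2 + 1 / 2 * B ^ 2 := by field_simp
      _ = lam * K1 / 2 * x₁ ζ ^ 2 + 1 / 2 * x₂ ζ ^ 2 := by rw [hA, hB, sq_abs, sq_abs]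
  -- upper bound for V
  have hVub : ∀ ζ, ζ₀ ≤ ζ → V ζ ≤ C2 * (x₁ ζ ^ 2 + x₂ ζ ^ 2) := by
    intro ζ hζ
    have hζpos : 0 < ζ := lt_of_lt_of_le hζ₀ hζ
    have hreg : |x₁ ζ| ≤ aL n Ω / 2 := Hreg ζ hζ
    have hFub : FL n Ω (x₁ ζ) ≤ K2 / 2 * x₁ ζ ^ 2 := by
      have := (FL_bounds hne hΩ hnz hreg).2; rwa [hK2def] at this
    have habsle : |x₁ ζ| * |x₂ ζ| ≤ (x₁ ζ ^ 2 + x₂ ζ ^ 2) / 2 := by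
      nlinarith [sq_nonneg (|x₁ ζ| - |x₂ ζ|), sq_abs (x₁ ζ), sq_abs (x₂ ζ)]
    have s1' : x₁ ζ * x₂ ζ / ζ ≤ |x₁ ζ| * |x₂ ζ| / ζ₀ :=
      div_le_div₀ (by positivity) (by rw [← abs_mul]; exact le_abs_self _) hζ₀ hζ
    have t1 : lam * (x₁ ζ * x₂ ζ / ζ) ≤ lam * (|x₁ ζ| * |x₂ ζ| / ζ₀) :=
      mul_le_mul_of_nonneg_left s1' hlam.le
    have t2 : lam * (|x₁ ζ| * |x₂ ζ| / ζ₀) ≤ lam / (2 * ζ₀) * (x₁ ζ ^ 2 + x₂ ζ ^ 2) := by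
      rw [show lam * (|x₁ ζ| * |x₂ ζ| / ζ₀) = lam / ζ₀ * (|x₁ ζ| * |x₂ ζ|) by ring,
        show lam / (2 * ζ₀) * (x₁ ζ ^ 2 + x₂ ζ ^ 2)
          = lam / ζ₀ * ((x₁ ζ ^ 2 + x₂ ζ ^ 2) / 2) by ring]
      exact mul_le_mul_of_nonneg_left habsle (by positivity)
    have hE2 : K2 / 2 * x₁ ζ ^ 2 ≤ M / 2 * x₁ ζ ^ 2 :=
      mul_le_mul_of_nonneg_right (by linarith) (sq_nonneg _)
    have hv2 : x₂ ζ ^ 2 / 2 ≤ M / 2 * x₂ ζ ^ 2 := by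
      have := mul_le_mul_of_nonneg_right (by linarith : (1:ℝ)/2 ≤ M/2) (sq_nonneg (x₂ ζ))
      linarith
    rw [hVval, EL_apply, ← hC2val]
    have expand : (M / 2 + lam / (2 * ζ₀)) * (x₁ ζ ^ 2 + x₂ ζ ^ 2)
        = M / 2 * x₁ ζ ^ 2 + M / 2 * x₂ ζ ^ 2
          + lam / (2 * ζ₀) * (x₁ ζ ^ 2 + x₂ ζ ^ 2) := by ring
    rw [expand]
    linarith
  -- key differential inequality
  have hkey : ∀ ζ, ζ₀ ≤ ζ → DV ζ ≤ -β * V ζ / ζ := by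
    intro ζ hζ
    have hζpos : 0 < ζ := lt_of_lt_of_le hζ₀ hζ
    have hζne : ζ ≠ 0 := hζpos.ne'
    have hreg : |x₁ ζ| ≤ aL n Ω / 2 := Hreg ζ hζ
    have hug : K1 * x₁ ζ ^ 2 ≤ x₁ ζ * gL n Ω (x₁ ζ) := by
      have := ug_lower hne hΩ hnz (le_trans (le_abs_self (x₁ ζ)) hreg)
      rwa [hK1def] at this
    have goal' : ζ * DV ζ ≤ -β * V ζ := by
      obtain ⟨P, hP⟩ : ∃ p : ℝ, x₁ ζ * x₂ ζ / ζ = p := ⟨_, rfl⟩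
      have e1 : ζ * DV ζ = -2 * x₂ ζ ^ 2 + lam * x₂ ζ ^ 2 - lam * (x₁ ζ * gL n Ω (x₁ ζ))
          - 3 * lam * P := by
        rw [hDVval, ← hP]; field_simp; ring
      have s1 : -(x₁ ζ * x₂ ζ) / ζ ≤ |x₁ ζ| * |x₂ ζ| / ζ₀ :=
        div_le_div₀ (by positivity) (by rw [← abs_mul]; exact neg_le_abs _) hζ₀ hζ
      have s1P : -P ≤ |x₁ ζ| * |x₂ ζ| / ζ₀ := by
        rw [← hP, ← neg_div]; exact s1
      have t1 : -(3 * lam) * P ≤ 3 * lam * (|x₁ ζ| * |x₂ ζ|) / ζ₀ := by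
        have h' := mul_le_mul_of_nonneg_left s1P (by positivity : (0:ℝ) ≤ 3 * lam)
        calc -(3 * lam) * P = 3 * lam * (-P) := by ring
          _ ≤ 3 * lam * (|x₁ ζ| * |x₂ ζ| / ζ₀) := h'
          _ = 3 * lam * (|x₁ ζ| * |x₂ ζ|) / ζ₀ := by ring
      have hcr : -(3 * lam) * P
          ≤ lam * K1 / 2 * x₁ ζ ^ 2 + 1 / 2 * x₂ ζ ^ 2 :=
        le_trans t1 (hcross_bound ζ hζ)
      have hgterm : lam * (K1 * x₁ ζ ^ 2) ≤ lam * (x₁ ζ * gL n Ω (x₁ ζ)) :=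
        mul_le_mul_of_nonneg_left hug hlam.le
      have hv2 : lam * x₂ ζ ^ 2 ≤ x₂ ζ ^ 2 := by
        have := mul_le_mul_of_nonneg_right hlam1 (sq_nonneg (x₂ ζ))
        linarith
      have step : ζ * DV ζ ≤ -(1/2) * x₂ ζ ^ 2 - lam * K1 / 2 * x₁ ζ ^ 2 := by
        rw [e1]
        clear hP
        have e6 : lam * (K1 * x₁ ζ ^ 2) = lam * K1 * x₁ ζ ^ 2 := by ring
        rw [e6] at hgterm
        linarith [hcr, hgterm, hv2]
      have hcc : -(1/2) * x₂ ζ ^ 2 - lam * K1 / 2 * x₁ ζ ^ 2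
          ≤ -c * (x₁ ζ ^ 2 + x₂ ζ ^ 2) := by
        have p1 := mul_le_mul_of_nonneg_right hc1 (sq_nonneg (x₂ ζ))
        have p2 := mul_le_mul_of_nonneg_right hc2 (sq_nonneg (x₁ ζ))
        have e7 : lam * K1 / 2 * x₁ ζ ^ 2 = lam * K1 * x₁ ζ ^ 2 / 2 := by ring
        nlinarith [p1, p2]
      have hcv : -c * (x₁ ζ ^ 2 + x₂ ζ ^ 2) ≤ -β * V ζ := by
        have h' := mul_le_mul_of_nonneg_left (hVub ζ hζ) hβ.le
        rw [show β * (C2 * (x₁ ζ ^ 2 + x₂ ζ ^ 2)) = β * C2 * (x₁ ζ ^ 2 + x₂ ζ ^ 2) by ring,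
          hβC2] at h'
        linarith
      linarith
    have hdd := (div_le_div_iff_of_pos_right hζpos).mpr goal'
    rw [show ζ * DV ζ / ζ = DV ζ by field_simp] at hdd
    linarith
  -- W = ζ^β * V is antitone
  set W : ℝ → ℝ := fun t => t ^ β * V t with hWdef
  have hWder : ∀ ζ ∈ Ioi ζ₀, HasDerivAt W (β * ζ ^ (β - 1) * V ζ + ζ ^ β * DV ζ) ζ := by
    intro ζ hζ
    have hζpos : 0 < ζ := lt_trans hζ₀ hζ
    have hr : HasDerivAt (fun t : ℝ => t ^ β) (β * ζ ^ (β - 1)) ζ :=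
      Real.hasDerivAt_rpow_const (Or.inl hζpos.ne')
    exact hr.mul ((hVder ζ (mem_Ici.mpr (le_of_lt hζ))).hasDerivAt (Ici_mem_nhds hζ))
  have hWanti : AntitoneOn W (Ici ζ₀) := by
    apply antitoneOn_of_deriv_nonpos (convex_Ici ζ₀)
    · intro t ht
      exact ((Real.continuousAt_rpow_const t β
        (Or.inl (lt_of_lt_of_le hζ₀ ht).ne')).continuousWithinAt).mul
        (hVder t ht).continuousWithinAt
    · rw [interior_Ici]
      intro ζ hζ
      exact (hWder ζ hζ).differentiableAt.differentiableWithinAt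
    · rw [interior_Ici]
      intro ζ hζ
      rw [(hWder ζ hζ).deriv]
      have hζpos : 0 < ζ := lt_trans hζ₀ hζ
      have h1 : ζ ^ β * DV ζ ≤ ζ ^ β * (-β * V ζ / ζ) :=
        mul_le_mul_of_nonneg_left (hkey ζ (le_of_lt hζ)) (Real.rpow_nonneg hζpos.le β)
      have h2 : ζ ^ β * (-β * V ζ / ζ) = -(β * ζ ^ (β - 1) * V ζ) := by
        rw [Real.rpow_sub_one hζpos.ne']
        ring
      rw [h2] at h1
      linarith
  -- decay bounds
  obtain ⟨K, hKval⟩ : ∃ K : ℝ, ζ₀ ^ β * V ζ₀ = K := ⟨_, rfl⟩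
  have hbound : ∀ ζ, ζ₀ ≤ ζ → x₁ ζ ^ 2 ≤ 4 / m * K * ζ ^ (-β)
      ∧ x₂ ζ ^ 2 ≤ 4 / m * K * ζ ^ (-β) := by
    intro ζ hζ
    have hζpos : 0 < ζ := lt_of_lt_of_le hζ₀ hζ
    have hW := hWanti self_mem_Ici hζ hζ
    have hreg : |x₁ ζ| ≤ aL n Ω / 2 := Hreg ζ hζ
    have hFlb : K1 / 2 * x₁ ζ ^ 2 ≤ FL n Ω (x₁ ζ) := by
      have := (FL_bounds hne hΩ hnz hreg).1; rwa [hK1def] at this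
    have habsle : |x₁ ζ| * |x₂ ζ| ≤ (x₁ ζ ^ 2 + x₂ ζ ^ 2) / 2 := by
      nlinarith [sq_nonneg (|x₁ ζ| - |x₂ ζ|), sq_abs (x₁ ζ), sq_abs (x₂ ζ)]
    have s1 : -(x₁ ζ * x₂ ζ) / ζ ≤ |x₁ ζ| * |x₂ ζ| / ζ₀ :=
      div_le_div₀ (by positivity) (by rw [← abs_mul]; exact neg_le_abs _) hζ₀ hζ
    have hVlb : m / 4 * (x₁ ζ ^ 2 + x₂ ζ ^ 2) ≤ V ζ := by
      have t1 : lam * (-(x₁ ζ * x₂ ζ) / ζ) ≤ lam * (|x₁ ζ| * |x₂ ζ| / ζ₀) :=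
        mul_le_mul_of_nonneg_left s1 hlam.le
      have hlz : lam / ζ₀ ≤ m / 2 := by
        rw [div_le_div_iff₀ hζ₀ (by norm_num)]
        linarith
      have t2 : lam * (|x₁ ζ| * |x₂ ζ| / ζ₀) ≤ m / 4 * (x₁ ζ ^ 2 + x₂ ζ ^ 2) := by
        rw [show lam * (|x₁ ζ| * |x₂ ζ| / ζ₀) = lam / ζ₀ * (|x₁ ζ| * |x₂ ζ|) by ring]
        calc lam / ζ₀ * (|x₁ ζ| * |x₂ ζ|) ≤ m / 2 * ((x₁ ζ ^ 2 + x₂ ζ ^ 2) / 2) :=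
              mul_le_mul hlz habsle (by positivity) (by positivity)
          _ = m / 4 * (x₁ ζ ^ 2 + x₂ ζ ^ 2) := by ring
      have hcr : -(m / 4 * (x₁ ζ ^ 2 + x₂ ζ ^ 2)) ≤ lam * (x₁ ζ * x₂ ζ / ζ) := by
        have : lam * (-(x₁ ζ * x₂ ζ) / ζ) = -(lam * (x₁ ζ * x₂ ζ / ζ)) := by ring
        rw [this] at t1
        linarith [le_trans t1 t2]
      have hmu : m / 2 * x₁ ζ ^ 2 ≤ K1 / 2 * x₁ ζ ^ 2 :=
        mul_le_mul_of_nonneg_right (by linarith) (sq_nonneg _)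
      have hmv : m / 2 * x₂ ζ ^ 2 ≤ x₂ ζ ^ 2 / 2 := by
        have := mul_le_mul_of_nonneg_right (by linarith : m/2 ≤ (1:ℝ)/2) (sq_nonneg (x₂ ζ))
        linarith
      rw [hVval, EL_apply]
      have expand : m / 4 * (x₁ ζ ^ 2 + x₂ ζ ^ 2)
          = m / 2 * x₁ ζ ^ 2 + m / 2 * x₂ ζ ^ 2
            - m / 4 * (x₁ ζ ^ 2 + x₂ ζ ^ 2) := by ring
      linarith
    have hrp : (0:ℝ) < ζ ^ β := Real.rpow_pos_of_pos hζpos β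
    have hVK : V ζ ≤ K * ζ ^ (-β) := by
      rw [Real.rpow_neg hζpos.le, show K * (ζ ^ β)⁻¹ = K / ζ ^ β by ring, le_div_iff₀ hrp]
      calc V ζ * ζ ^ β = ζ ^ β * V ζ := by ring
        _ ≤ ζ₀ ^ β * V ζ₀ := hW
        _ = K := hKval
    have hfrac : (0:ℝ) < 4 / m := by positivity
    constructor
    · have h1 : m / 4 * x₁ ζ ^ 2 ≤ K * ζ ^ (-β) := by
        have := mul_nonneg hm.le (sq_nonneg (x₂ ζ)); linarith
      have h2 := mul_le_mul_of_nonneg_left h1 hfrac.le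
      have e : 4 / m * (m / 4 * x₁ ζ ^ 2) = x₁ ζ ^ 2 := by field_simp
      rw [e] at h2
      linarith [h2]
    · have h1 : m / 4 * x₂ ζ ^ 2 ≤ K * ζ ^ (-β) := by
        have := mul_nonneg hm.le (sq_nonneg (x₁ ζ)); linarith
      have h2 := mul_le_mul_of_nonneg_left h1 hfrac.le
      have e : 4 / m * (m / 4 * x₂ ζ ^ 2) = x₂ ζ ^ 2 := by field_simp
      rw [e] at h2
      linarith [h2]
  -- conclude
  have htend0 : Tendsto (fun ζ : ℝ => 4 / m * K * ζ ^ (-β)) atTop (nhds 0) := by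
    have := (tendsto_rpow_neg_atTop hβ).const_mul (4 / m * K)
    simpa [mul_comm] using this
  have hsq : ∀ (f : ℝ → ℝ), (∀ ζ, ζ₀ ≤ ζ → f ζ ^ 2 ≤ 4 / m * K * ζ ^ (-β)) →
      Tendsto f atTop (nhds 0) := by
    intro f hf
    have hsq2 : Tendsto (fun ζ => f ζ ^ 2) atTop (nhds 0) :=
      squeeze_zero' (Eventually.of_forall fun t => sq_nonneg _)
        ((eventually_ge_atTop ζ₀).mono fun ζ hζ => hf ζ hζ) htend0
    rw [tendsto_zero_iff_abs_tendsto_zero]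
    have := (Real.continuous_sqrt.tendsto' 0 0 Real.sqrt_zero).comp hsq2
    simpa [Function.comp_def, Real.sqrt_sq_eq_abs] using this
  exact ⟨hsq x₁ fun ζ hζ => (hbound ζ hζ).1, hsq x₂ fun ζ hζ => (hbound ζ hζ).2⟩


end LEaux

open LEaux in
/-- For n ≥ 2 even, 0 < Ω < 1 and ζ₀ > 0, the origin of the
shifted even system is asymptotically stable: it is Lyapunov stable, and some
l > 0 exists such that all solutions starting within Euclidean distance l of
the origin converge to the origin as ζ → ∞. -/
theorem laneEmden_origin_asymptotically_stable
    (n : ℕ) (hn : 2 ≤ n) (hne : Even n) (Ω ζ₀ : ℝ)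
    (hΩ : 0 < Ω) (hΩ1 : Ω < 1) (hζ₀ : 0 < ζ₀) :
    (∀ ε : ℝ, 0 < ε → ∃ δ : ℝ, 0 < δ ∧
      ∀ x₁ x₂ : ℝ → ℝ, IsSolShiftedEven n Ω ζ₀ x₁ x₂ →
        Real.sqrt (x₁ ζ₀ ^ 2 + x₂ ζ₀ ^ 2) < δ →
        ∀ ζ : ℝ, ζ₀ ≤ ζ → Real.sqrt (x₁ ζ ^ 2 + x₂ ζ ^ 2) < ε) ∧
    (∃ l : ℝ, 0 < l ∧
      ∀ x₁ x₂ : ℝ → ℝ, IsSolShiftedEven n Ω ζ₀ x₁ x₂ →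
        Real.sqrt (x₁ ζ₀ ^ 2 + x₂ ζ₀ ^ 2) < l →
        Tendsto x₁ atTop (nhds 0) ∧ Tendsto x₂ atTop (nhds 0)) := by
  have hnz : n ≠ 0 := by omega
  have ha : 0 < aL n Ω := aL_pos hΩ
  have hk1 : 0 < k1 n Ω := k1_pos hΩ hnz
  have hk12 : k1 n Ω ≤ k2 n Ω := k1_le_k2 hΩ
  obtain ⟨m, hm, hm1, hmK1⟩ : ∃ m : ℝ, 0 < m ∧ m ≤ 1 ∧ m ≤ k1 n Ω :=
    ⟨min (k1 n Ω) 1, lt_min hk1 one_pos, min_le_right _ _, min_le_left _ _⟩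
  obtain ⟨M, hM, hM1, hK2M⟩ : ∃ M : ℝ, 0 < M ∧ (1:ℝ) ≤ M ∧ k2 n Ω ≤ M :=
    ⟨max (k2 n Ω) 1, lt_of_lt_of_le one_pos (le_max_right _ _), le_max_right _ _,
      le_max_left _ _⟩
  -- the core invariance and smallness estimate
  have core : ∀ ρ : ℝ, 0 < ρ → ρ ≤ aL n Ω / 2 → ∀ x₁ x₂ : ℝ → ℝ,
      IsSolShiftedEven n Ω ζ₀ x₁ x₂ →
      Real.sqrt (x₁ ζ₀ ^ 2 + x₂ ζ₀ ^ 2) < min ρ (ρ * Real.sqrt (m / M)) →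
      (∀ ζ, ζ₀ ≤ ζ → |x₁ ζ| < ρ) ∧ (∀ ζ, ζ₀ ≤ ζ → x₁ ζ ^ 2 + x₂ ζ ^ 2 < ρ ^ 2) := by
    intro ρ hρ hρa x₁ x₂ hx hin
    have hsmM : 0 < Real.sqrt (m / M) := Real.sqrt_pos.mpr (by positivity)
    have hδpos : 0 < min ρ (ρ * Real.sqrt (m / M)) :=
      lt_min hρ (by positivity)
    set δ := min ρ (ρ * Real.sqrt (m / M)) with hδdef
    have hδρ : δ ≤ ρ := min_le_left _ _
    have hδa : δ ≤ aL n Ω / 2 := le_trans hδρ hρa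
    have hsum0 : x₁ ζ₀ ^ 2 + x₂ ζ₀ ^ 2 < δ ^ 2 := (Real.sqrt_lt' hδpos).mp hin
    have habs0 : |x₁ ζ₀| < δ := by
      nlinarith [abs_nonneg (x₁ ζ₀), sq_abs (x₁ ζ₀), sq_nonneg (x₂ ζ₀), hδpos]
    have hδ2 : δ ^ 2 ≤ ρ ^ 2 * (m / M) := by
      have h1 : δ ≤ ρ * Real.sqrt (m / M) := min_le_right _ _
      have h2 : δ ^ 2 ≤ (ρ * Real.sqrt (m / M)) ^ 2 :=
        pow_le_pow_left₀ hδpos.le h1 2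
      have h3 : (ρ * Real.sqrt (m / M)) ^ 2 = ρ ^ 2 * (m / M) := by
        rw [mul_pow, Real.sq_sqrt (by positivity : (0:ℝ) ≤ m / M)]
      linarith
    -- energy bound at ζ₀
    have habs0' : |x₁ ζ₀| ≤ aL n Ω / 2 := le_trans habs0.le hδa
    have hFub0 : FL n Ω (x₁ ζ₀) ≤ k2 n Ω / 2 * x₁ ζ₀ ^ 2 :=
      (FL_bounds hne hΩ hnz habs0').2
    have hE0 : EL n Ω x₁ x₂ ζ₀ < m / 2 * ρ ^ 2 := by
      have p1 : k2 n Ω / 2 * x₁ ζ₀ ^ 2 ≤ M / 2 * x₁ ζ₀ ^ 2 :=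
        mul_le_mul_of_nonneg_right (by linarith) (sq_nonneg _)
      have p2 : x₂ ζ₀ ^ 2 / 2 ≤ M / 2 * x₂ ζ₀ ^ 2 := by
        have := mul_le_mul_of_nonneg_right (by linarith : (1:ℝ)/2 ≤ M/2) (sq_nonneg (x₂ ζ₀))
        linarith
      have c1 : EL n Ω x₁ x₂ ζ₀ ≤ M / 2 * x₁ ζ₀ ^ 2 + M / 2 * x₂ ζ₀ ^ 2 := by
        rw [EL_apply]; linarith
      have c2 : M / 2 * x₁ ζ₀ ^ 2 + M / 2 * x₂ ζ₀ ^ 2 < M / 2 * δ ^ 2 := by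
        have := mul_lt_mul_of_pos_left hsum0 (by positivity : (0:ℝ) < M / 2)
        linarith [this]
      have c3 : M / 2 * δ ^ 2 ≤ M / 2 * (ρ ^ 2 * (m / M)) :=
        mul_le_mul_of_nonneg_left hδ2 (by positivity)
      have c4 : M / 2 * (ρ ^ 2 * (m / M)) = m / 2 * ρ ^ 2 := by
        field_simp
      linarith
    have hE0' : EL n Ω x₁ x₂ ζ₀ < k1 n Ω / 2 * ρ ^ 2 := by
      have : m / 2 * ρ ^ 2 ≤ k1 n Ω / 2 * ρ ^ 2 :=
        mul_le_mul_of_nonneg_right (by linarith) (sq_nonneg _)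
      linarith
    have hinv : ∀ ζ, ζ₀ ≤ ζ → |x₁ ζ| < ρ :=
      invariance hne hΩ hnz hζ₀ hx hρ hρa (lt_of_lt_of_le habs0 hδρ) hE0'
    refine ⟨hinv, fun ζ hζ => ?_⟩
    have hEζ : EL n Ω x₁ x₂ ζ ≤ EL n Ω x₁ x₂ ζ₀ :=
      EL_anti hζ₀ hx self_mem_Ici hζ hζ
    have hregζ : |x₁ ζ| ≤ aL n Ω / 2 := le_trans (hinv ζ hζ).le hρa
    have hFlb : k1 n Ω / 2 * x₁ ζ ^ 2 ≤ FL n Ω (x₁ ζ) :=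
      (FL_bounds hne hΩ hnz hregζ).1
    have q1 : m / 2 * x₁ ζ ^ 2 ≤ k1 n Ω / 2 * x₁ ζ ^ 2 :=
      mul_le_mul_of_nonneg_right (by linarith) (sq_nonneg _)
    have q2 : m / 2 * x₂ ζ ^ 2 ≤ x₂ ζ ^ 2 / 2 := by
      have := mul_le_mul_of_nonneg_right (by linarith : m/2 ≤ (1:ℝ)/2) (sq_nonneg (x₂ ζ))
      linarith
    have q3 : m / 2 * (x₁ ζ ^ 2 + x₂ ζ ^ 2) ≤ EL n Ω x₁ x₂ ζ := by
      rw [EL_apply]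
      have e : m / 2 * (x₁ ζ ^ 2 + x₂ ζ ^ 2) = m / 2 * x₁ ζ ^ 2 + m / 2 * x₂ ζ ^ 2 := by
        ring
      linarith
    have q4 : m / 2 * (x₁ ζ ^ 2 + x₂ ζ ^ 2) < m / 2 * ρ ^ 2 := by linarith
    exact (mul_lt_mul_iff_right₀ (by positivity : (0:ℝ) < m / 2)).mp q4
  constructor
  · -- Lyapunov stability
    intro ε hε
    set ρ := min (ε / 2) (aL n Ω / 2) with hρdef
    have hρ : 0 < ρ := lt_min (by positivity) (by positivity)
    have hρa : ρ ≤ aL n Ω / 2 := min_le_right _ _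
    have hsmM : 0 < Real.sqrt (m / M) := Real.sqrt_pos.mpr (by positivity)
    refine ⟨min ρ (ρ * Real.sqrt (m / M)), lt_min hρ (mul_pos hρ hsmM), ?_⟩
    intro x₁ x₂ hx hin ζ hζ
    have hcore := (core ρ hρ hρa x₁ x₂ hx hin).2 ζ hζ
    have hρε : ρ ≤ ε / 2 := min_le_left _ _
    have hρ2 : ρ ^ 2 ≤ (ε / 2) ^ 2 := pow_le_pow_left₀ hρ.le hρε 2
    have : x₁ ζ ^ 2 + x₂ ζ ^ 2 < ε ^ 2 := by nlinarith [hε]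
    exact (Real.sqrt_lt' hε).mpr this
  · -- asymptotic stability
    set ρ := aL n Ω / 2 with hρdef
    have hρ : 0 < ρ := by positivity
    have hsmM : 0 < Real.sqrt (m / M) := Real.sqrt_pos.mpr (by positivity)
    refine ⟨min ρ (ρ * Real.sqrt (m / M)), lt_min hρ (mul_pos hρ hsmM), ?_⟩
    intro x₁ x₂ hx hin
    have hcore := (core ρ hρ le_rfl x₁ x₂ hx hin).1
    exact asymp hne hΩ hnz hζ₀ hx fun ζ hζ => (hcore ζ hζ).le
end
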